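/- arXiv:1705.00554 — 6 statements merged into one kernel-verified Lean document; each statement's English description precedes it below -/
import Mathlib

section
/- Every decomposable graph admits a pluperfect ordering of its cliques: an ordering C_1, …, C_J of the maximal cliques such that for each j ≥ 2 the separator S_j = C_j ∩ (C_1 ∪ … ∪ C_{j-1}) is not a proper subset of any separator S'_j = C' ∩ (C_1 ∪ … ∪ C_{j-1}) arising from a different clique C' available at step j (i.e., a clique C' ∉ {C_1,…,C_{j-1}} with C' ∩ (C_1 ∪ … ∪ C_{j-1}) contained in some single C_i, i < j). Moreover, any clique can be chosen first. -/
open scoped Classical BigOperators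

/-- A graph is decomposable (chordal) if it has no induced cycle of length at least 4. -/
def Chordal {V : Type*} (G : SimpleGraph V) : Prop :=
  ¬ ∃ (n : ℕ) (f : ZMod n ↪ V), 4 ≤ n ∧
      ∀ i j : ZMod n, G.Adj (f i) (f j) ↔ (i = j + 1 ∨ j = i + 1)

/-- `C` is a maximal clique (a "clique" in the terminology of the paper) of `G`. -/
def MaxClique {V : Type*} (G : SimpleGraph V) (C : Set V) : Prop :=
  G.IsClique C ∧ ∀ D, G.IsClique D → C ⊆ D → C = D

/-- `C` is a maximal complete subset of the subgraph of `G` induced on `A`,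
i.e. a clique of `G_A`. -/
def MaxCliqueIn {V : Type*} (G : SimpleGraph V) (A C : Set V) : Prop :=
  C ⊆ A ∧ G.IsClique C ∧ ∀ D, D ⊆ A → G.IsClique D → C ⊆ D → C = D

/-- `(A,B)` is a decomposition of `G`: it covers the vertex set, `A ∩ B` is complete
and `A ∩ B` separates `A \ B` from `B \ A`. -/
def IsDecomposition {V : Type*} (G : SimpleGraph V) (A B : Set V) : Prop :=
  A ∪ B = Set.univ ∧ G.IsClique (A ∩ B) ∧
    ∀ u ∈ A \ B, ∀ v ∈ B \ A, ∀ p : G.Walk u v, ∃ w ∈ A ∩ B, w ∈ p.support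

/-- The graph `G⟨A₁,…,A_k⟩` on `V` that is complete on each member of `𝒜` and
has no other edges. -/
def coverGraph {V : Type*} (𝒜 : Set (Set V)) : SimpleGraph V where
  Adj u v := u ≠ v ∧ ∃ A ∈ 𝒜, u ∈ A ∧ v ∈ A
  symm := by
    constructor
    rintro u v ⟨huv, A, hA, hu, hv⟩
    exact ⟨huv.symm, A, hA, hv, hu⟩
  loopless := by constructor; rintro v ⟨hv, -⟩; exact hv rfl

/-- Total mass that the density `π` puts on a set of graphs. -/
noncomputable def mass {V : Type*} (π : SimpleGraph V → ℝ) (S : Set (SimpleGraph V)) : ℝ :=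
  ∑ᶠ G ∈ S, π G

/-- `𝔘*(A,B)`: decomposable graphs for which `(A,B)` is a decomposition and
`A ∩ B` is a clique (maximal complete subgraph) of `G_A`. -/
def Ustar {V : Type*} (A B : Set V) : Set (SimpleGraph V) :=
  {G | Chordal G ∧ IsDecomposition G A B ∧ MaxCliqueIn G A (A ∩ B)}

/-- The weak structural Markov property: for every covering pair `(A,B)`,
the induced subgraphs `G_A` and `G_B` are independent conditionally on
`G ∈ 𝔘*(A,B)`. -/
def WeaklyStructurallyMarkov {V : Type*} (π : SimpleGraph V → ℝ) : Prop :=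
  ∀ A B : Set V, A ∪ B = Set.univ →
    ∀ H₁ ∈ Ustar A B, ∀ H₂ ∈ Ustar A B,
      mass π {G ∈ Ustar A B |
            G.induce A = H₁.induce A ∧ G.induce B = H₂.induce B} *
          mass π (Ustar A B) =
        mass π {G ∈ Ustar A B | G.induce A = H₁.induce A} *
          mass π {G ∈ Ustar A B | G.induce B = H₂.induce B}

/-- `π` is the density of a graph law on the set of decomposable graphs on `V`. -/
def IsGraphLaw {V : Type*} [Fintype V] (π : SimpleGraph V → ℝ) : Prop :=
  (∀ G, 0 ≤ π G) ∧ (∀ G, ¬ Chordal G → π G = 0) ∧ ∑ᶠ G : SimpleGraph V, π G = 1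

/-- `π` has full support on the decomposable graphs. -/
def FullSupport {V : Type*} (π : SimpleGraph V → ℝ) : Prop :=
  ∀ G, Chordal G → 0 < π G

/-- A junction tree for `G`: a tree on the maximal cliques of `G` such that the
cliques containing any fixed vertex form a connected subtree. -/
structure JunctionTree {V : Type*} (G : SimpleGraph V) where
  J : ℕ
  clique : Fin J → Set V
  clique_inj : Function.Injective clique
  clique_max : ∀ i, MaxClique G (clique i)
  clique_surj : ∀ C, MaxClique G C → ∃ i, clique i = C
  T : SimpleGraph (Fin J)
  isTree : T.IsTree
  junction : ∀ v : V, ((T.induce {i | v ∈ clique i}).Connected)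

/-- The separator associated with an (unordered) edge of a junction tree. -/
def JunctionTree.sep {V : Type*} {G : SimpleGraph V} (JT : JunctionTree G) :
    Sym2 (Fin JT.J) → Set V :=
  Sym2.lift ⟨fun i j => JT.clique i ∩ JT.clique j, fun i j => Set.inter_comm _ _⟩

/-- `π` is a clique–separator factorisation law: its density is proportional to
`∏_C φ_C / ∏_S ψ_S` over the cliques and separators of `G`. -/
def IsCSFLaw {V : Type*} (π : SimpleGraph V → ℝ) : Prop :=
  ∃ (φ ψ : Set V → ℝ) (c : ℝ), (∀ A, 0 < φ A) ∧ (∀ A, 0 < ψ A) ∧ 0 < c ∧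
    ∀ G : SimpleGraph V, Chordal G → ∀ JT : JunctionTree G,
      π G = c * (∏ i : Fin JT.J, φ (JT.clique i)) /
        ∏ᶠ e ∈ JT.T.edgeSet, ψ (JT.sep e)

/-- The union of the cliques visited before step `j`. -/
def priorUnion {V : Type*} {J : ℕ} (f : Fin J → Set V) (j : Fin J) : Set V :=
  ⋃ i ∈ {i : Fin J | i < j}, f i

/-- `f` is a pluperfect ordering of the (maximal) cliques of `G`: at each step the
clique chosen is available and its separator is not a proper subset of the
separator of any other available clique. -/
def PluperfectOrdering {V : Type*} (G : SimpleGraph V) {J : ℕ} (f : Fin J → Set V) : Prop :=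
  Function.Injective f ∧ (∀ i, MaxClique G (f i)) ∧ (∀ C, MaxClique G C → ∃ i, f i = C) ∧
  ∀ j : Fin J, (j : ℕ) ≠ 0 →
    (∃ i < j, f j ∩ priorUnion f j ⊆ f i) ∧
    ∀ k : Fin J, j ≤ k → (∃ i < j, f k ∩ priorUnion f j ⊆ f i) →
      ¬ f j ∩ priorUnion f j ⊂ f k ∩ priorUnion f j

namespace ChordalAux

variable {V : Type*} {G : SimpleGraph V}

/-- A chain from `s` to `t` of length `n` whose interior lies in `B`. -/
def IChain (G : SimpleGraph V) (B : Set V) (s t : V) (n : ℕ) (c : ℕ → V) : Prop :=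
  c 0 = s ∧ c n = t ∧ (∀ i, 0 < i → i < n → c i ∈ B) ∧ (∀ i, i < n → G.Adj (c i) (c (i+1)))

/-- Connectivity within a set `B` (endpoints included in `B`). -/
def Conn (G : SimpleGraph V) (B : Set V) (u v : V) : Prop :=
  ∃ (n : ℕ) (c : ℕ → V), c 0 = u ∧ c n = v ∧ (∀ i, i ≤ n → c i ∈ B) ∧
    (∀ i, i < n → G.Adj (c i) (c (i+1)))

lemma Conn.mem_left {B : Set V} {u v : V} (h : Conn G B u v) : u ∈ B := by
  obtain ⟨n, c, h0, hn, hB, _⟩ := h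
  have := hB 0 (Nat.zero_le _); rwa [h0] at this

lemma Conn.mem_right {B : Set V} {u v : V} (h : Conn G B u v) : v ∈ B := by
  obtain ⟨n, c, h0, hn, hB, _⟩ := h
  have := hB n le_rfl; rwa [hn] at this

lemma Conn.refl {B : Set V} {u : V} (h : u ∈ B) : Conn G B u u :=
  ⟨0, fun _ => u, rfl, rfl, fun _ _ => h, fun i hi => absurd hi (Nat.not_lt_zero i)⟩

lemma Conn.symm {B : Set V} {u v : V} (h : Conn G B u v) : Conn G B v u := by
  obtain ⟨n, c, h0, hn, hB, hA⟩ := h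
  refine ⟨n, fun k => c (n - k), by simpa using hn, by simpa using h0, ?_, ?_⟩
  · intro i hi; exact hB _ (by omega)
  · intro i hi
    show G.Adj (c (n - i)) (c (n - (i+1)))
    have h1 : n - i = (n - (i+1)) + 1 := by omega
    rw [h1]
    exact (hA (n - (i+1)) (by omega)).symm

lemma Conn.trans {B : Set V} {u v w : V} (h1 : Conn G B u v) (h2 : Conn G B v w) :
    Conn G B u w := by
  obtain ⟨n, c, hc0, hcn, hcB, hcA⟩ := h1
  obtain ⟨m, d, hd0, hdm, hdB, hdA⟩ := h2
  set e : ℕ → V := fun k => if k ≤ n then c k else d (k - n) with he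
  have hval : ∀ k, n ≤ k → e k = d (k - n) := by
    intro k hk
    by_cases h : k ≤ n
    · have : k = n := le_antisymm h hk
      subst this; simp only [he, if_pos le_rfl, Nat.sub_self, hd0, hcn]
    · simp only [he, if_neg h]
  refine ⟨n + m, e, ?_, ?_, ?_, ?_⟩
  · simp only [he, if_pos (Nat.zero_le n), hc0]
  · rw [hval (n + m) (by omega), Nat.add_sub_cancel_left, hdm]
  · intro i hi
    by_cases h : i ≤ n
    · simp only [he, if_pos h]; exact hcB i h
    · simp only [he, if_neg h]; exact hdB (i - n) (by omega)
  · intro i hi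
    by_cases h : i + 1 ≤ n
    · simp only [he, if_pos (by omega : i ≤ n), if_pos h]; exact hcA i (by omega)
    · rw [hval (i+1) (by omega)]
      by_cases h2 : i ≤ n
      · have : i = n := by omega
        subst this
        simp only [he, if_pos le_rfl, hcn, Nat.add_sub_cancel_left]
        have := hdA 0 (by omega)
        rw [hd0] at this
        simpa using this
      · simp only [he, if_neg h2]
        have := hdA (i - n) (by omega)
        have h3 : i - n + 1 = i + 1 - n := by omega
        rwa [h3] at this

lemma Conn.adj {B : Set V} {u v : V} (h : G.Adj u v) (hu : u ∈ B) (hv : v ∈ B) :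
    Conn G B u v := by
  refine ⟨1, fun k => if k = 0 then u else v, by simp, by simp, ?_, ?_⟩
  · intro i hi; interval_cases i <;> simp [hu, hv]
  · intro i hi; interval_cases i; simpa using h

lemma Conn.mono {B B' : Set V} (hBB : B ⊆ B') {u v : V} (h : Conn G B u v) :
    Conn G B' u v := by
  obtain ⟨n, c, h0, hn, hB, hA⟩ := h
  exact ⟨n, c, h0, hn, fun i hi => hBB (hB i hi), hA⟩

/-- A minimal-length interior chain is an induced (chordless) path. -/
lemma exists_min_ichain {B : Set V} {s t : V} (hs : s ∉ B) (ht : t ∉ B) (hst : s ≠ t)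
    (hna : ¬ G.Adj s t) (hex : ∃ n c, IChain G B s t n c) :
    ∃ m c, IChain G B s t m c ∧ 2 ≤ m ∧
      (∀ i j, i ≤ m → j ≤ m → c i = c j → i = j) ∧
      (∀ i j, i + 2 ≤ j → j ≤ m → ¬ G.Adj (c i) (c j)) := by
  classical
  let P : ℕ → Prop := fun n => ∃ c, IChain G B s t n c
  have hP : ∃ n, P n := hex
  obtain ⟨m, ⟨c, hc0, hcm, hcB, hcA⟩, hmin⟩ :
      ∃ m, P m ∧ ∀ k, k < m → ¬ P k :=
    ⟨Nat.find hP, Nat.find_spec hP, fun k hk => Nat.find_min hP hk⟩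
  have hm0 : m ≠ 0 := by
    rintro rfl
    rw [hcm] at hc0; exact hst hc0.symm
  have hm1 : m ≠ 1 := by
    rintro rfl
    have := hcA 0 (by omega)
    rw [hc0] at this
    rw [hcm] at this
    exact hna this
  have hm2 : 2 ≤ m := by omega
  have hkey : ∀ i j, i < j → j ≤ m → c i ≠ c j := by
    intro i j hij hjm hEq
    have hjm' : j < m := by
      rcases Nat.lt_or_ge j m with h | h
      · exact h
      · exfalso
        have hj : j = m := by omega
        rw [hj, hcm] at hEq
        rcases Nat.eq_zero_or_pos i with h0 | h0
        · rw [h0, hc0] at hEq; exact hst hEq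
        · exact ht (hEq ▸ hcB i h0 (by omega))
    set d := j - i with hd
    have hd1 : 1 ≤ d := by omega
    set c' : ℕ → V := fun k => if k ≤ i then c k else c (k + d) with hc'
    have hv1 : ∀ k, k ≤ i → c' k = c k := fun k hk => by simp only [hc', if_pos hk]
    have hv2 : ∀ k, ¬ (k ≤ i) → c' k = c (k + d) := fun k hk => by simp only [hc', if_neg hk]
    have : P (m - d) := by
      refine ⟨c', ?_, ?_, ?_, ?_⟩
      · rw [hv1 0 (Nat.zero_le i), hc0]
      · rw [hv2 (m - d) (by omega), show m - d + d = m by omega, hcm]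
      · intro k hk0 hkm
        by_cases h : k ≤ i
        · rw [hv1 k h]; exact hcB k hk0 (by omega)
        · rw [hv2 k h]; exact hcB (k + d) (by omega) (by omega)
      · intro k hk
        by_cases h1 : k + 1 ≤ i
        · rw [hv1 k (by omega), hv1 (k+1) h1]; exact hcA k (by omega)
        · by_cases h2 : k ≤ i
          · have hki : k = i := by omega
            subst hki
            rw [hv1 k le_rfl, hv2 (k+1) h1, hEq, show k + 1 + d = j + 1 by omega]
            exact hcA j hjm'
          · rw [hv2 k h2, hv2 (k+1) (by omega), show k + 1 + d = k + d + 1 by omega]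
            exact hcA (k + d) (by omega)
    exact hmin (m - d) (by omega) this
  have hinj : ∀ i j, i ≤ m → j ≤ m → c i = c j → i = j := by
    intro i j hi hj hEq
    rcases lt_trichotomy i j with h | h | h
    · exact absurd hEq (hkey i j h hj)
    · exact h
    · exact absurd hEq.symm (hkey j i h hi)
  have hchord : ∀ i j, i + 2 ≤ j → j ≤ m → ¬ G.Adj (c i) (c j) := by
    intro i j hij hjm hAdj
    set d := j - i - 1 with hd
    have hd1 : 1 ≤ d := by omega
    set c' : ℕ → V := fun k => if k ≤ i then c k else c (k + d) with hc'
    have hv1 : ∀ k, k ≤ i → c' k = c k := fun k hk => by simp only [hc', if_pos hk]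
    have hv2 : ∀ k, ¬ (k ≤ i) → c' k = c (k + d) := fun k hk => by simp only [hc', if_neg hk]
    have : P (m - d) := by
      refine ⟨c', ?_, ?_, ?_, ?_⟩
      · rw [hv1 0 (Nat.zero_le i), hc0]
      · rw [hv2 (m - d) (by omega), show m - d + d = m by omega, hcm]
      · intro k hk0 hkm
        by_cases h : k ≤ i
        · rw [hv1 k h]; exact hcB k hk0 (by omega)
        · rw [hv2 k h]; exact hcB (k + d) (by omega) (by omega)
      · intro k hk
        by_cases h1 : k + 1 ≤ i
        · rw [hv1 k (by omega), hv1 (k+1) h1]; exact hcA k (by omega)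
        · by_cases h2 : k ≤ i
          · have hki : k = i := by omega
            subst hki
            rw [hv1 k le_rfl, hv2 (k+1) h1, show k + 1 + d = j by omega]
            exact hAdj
          · rw [hv2 k h2, hv2 (k+1) (by omega), show k + 1 + d = k + d + 1 by omega]
            exact hcA (k + d) (by omega)
    exact hmin (m - d) (by omega) this
  exact ⟨m, c, ⟨hc0, hcm, hcB, hcA⟩, hm2, hinj, hchord⟩

/-- From a chordless cycle one concludes the graph is not chordal. -/
lemma not_chordal_of_cycle {L : ℕ} (hL : 4 ≤ L) (c : ℕ → V)
    (hinj : ∀ i j, i < L → j < L → c i = c j → i = j)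
    (hiff : ∀ i j, i < L → j < L →
      (G.Adj (c i) (c j) ↔ (j = i + 1 ∨ i = j + 1 ∨ (i = 0 ∧ j = L - 1) ∨ (j = 0 ∧ i = L - 1)))) :
    ¬ Chordal G := by
  intro hch
  haveI : NeZero L := ⟨by omega⟩
  haveI : Fact (1 < L) := ⟨by omega⟩
  have hcast : ∀ z : ZMod L, ((z.val : ℕ) : ZMod L) = z := fun z => ZMod.natCast_rightInverse z
  have key : ∀ a b : ZMod L, a = b + 1 ↔ (a.val = b.val + 1 ∨ (b.val = L - 1 ∧ a.val = 0)) := by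
    intro a b
    have hb := ZMod.val_lt b
    have ha := ZMod.val_lt a
    constructor
    · rintro rfl
      have hv : (b+1).val = (b.val + 1) % L := by rw [ZMod.val_add, ZMod.val_one]
      by_cases hbL : b.val = L - 1
      · right
        refine ⟨hbL, ?_⟩
        rw [hv, hbL, Nat.sub_add_cancel (by omega), Nat.mod_self]
      · left; rw [hv, Nat.mod_eq_of_lt (by omega)]
    · intro h
      have hv : a.val = (b+1).val := by
        rw [ZMod.val_add, ZMod.val_one]
        rcases h with h | ⟨h1, h2⟩
        · rw [Nat.mod_eq_of_lt (by omega)]; exact h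
        · rw [h1, h2, Nat.sub_add_cancel (by omega), Nat.mod_self]
      have := congrArg (fun k : ℕ => (k : ZMod L)) hv
      simpa only [hcast] using this
  refine hch ⟨L, ⟨fun z => c z.val, ?_⟩, by omega, ?_⟩
  · intro z w h
    have := hinj _ _ (ZMod.val_lt z) (ZMod.val_lt w) h
    have h2 := congrArg (fun k : ℕ => (k : ZMod L)) this
    simpa only [hcast] using h2
  · intro i j
    show G.Adj (c i.val) (c j.val) ↔ _
    rw [hiff _ _ (ZMod.val_lt i) (ZMod.val_lt j), key i j, key j i]
    have hi := ZMod.val_lt i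
    have hj := ZMod.val_lt j
    constructor
    · rintro (h | h | ⟨h1, h2⟩ | ⟨h1, h2⟩) <;> tauto
    · rintro ((h | ⟨h1, h2⟩) | (h | ⟨h1, h2⟩)) <;> tauto


lemma conn_upgrade {D : Set V} {x y a : V} (hax : Conn G D a x) (h : Conn G D x y) :
    Conn G {z | Conn G D a z} x y := by
  obtain ⟨n, c, h0, hn, hB, hA⟩ := h
  refine ⟨n, c, h0, hn, ?_, hA⟩
  intro i hi
  have hpre : Conn G D x (c i) :=
    ⟨i, c, h0, rfl, fun k hk => hB k (by omega), fun k hk => hA k (by omega)⟩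
  exact hax.trans hpre

lemma ichain_of_conn {B : Set V} {s t x y : V} (hsx : G.Adj s x) (hyt : G.Adj y t)
    (h : Conn G B x y) : ∃ n c, IChain G B s t n c := by
  obtain ⟨n, c, h0, hn, hB, hA⟩ := h
  set c' : ℕ → V := fun k => if k = 0 then s else if k ≤ n + 1 then c (k - 1) else t with hc'
  have hv0 : c' 0 = s := by simp only [hc', if_pos rfl]
  have hvi : ∀ k, 1 ≤ k → k ≤ n + 1 → c' k = c (k - 1) := by
    intro k h1 h2; simp only [hc', if_neg (by omega : ¬ k = 0), if_pos h2]
  have hvt : c' (n + 2) = t := by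
    simp only [hc', if_neg (by omega : ¬ n + 2 = 0), if_neg (by omega : ¬ n + 2 ≤ n + 1)]
  refine ⟨n + 2, c', hv0, hvt, ?_, ?_⟩
  · intro i hi0 hin
    rw [hvi i (by omega) (by omega)]
    exact hB (i - 1) (by omega)
  · intro i hi
    rcases Nat.eq_zero_or_pos i with hz | hpos
    · subst hz
      rw [hv0, hvi 1 le_rfl (by omega), show (1:ℕ) - 1 = 0 by omega, h0]
      exact hsx
    · rcases Nat.lt_or_ge i (n + 1) with hlt | hge
      · rw [hvi i hpos (by omega), hvi (i+1) (by omega) (by omega)]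
        have h2 := hA (i - 1) (by omega)
        rw [show i - 1 + 1 = i by omega] at h2
        rw [show i + 1 - 1 = i by omega]
        exact h2
      · have hieq : i = n + 1 := by omega
        subst hieq
        rw [hvi (n+1) (by omega) le_rfl, show n + 1 - 1 = n by omega, hn,
          show n + 1 + 1 = n + 2 by omega, hvt]
        exact hyt

/-- Two internally disjoint, non-crossing connecting chains yield a chordless cycle. -/
lemma not_chordal_two_sides {Ca Cb : Set V} {s t : V}
    (hdisj : ∀ x, x ∈ Ca → x ∈ Cb → False)
    (hcross : ∀ x y, x ∈ Ca → y ∈ Cb → ¬ G.Adj x y)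
    (hsa : s ∉ Ca) (hsb : s ∉ Cb) (hta : t ∉ Ca) (htb : t ∉ Cb)
    (hst : s ≠ t) (hnadj : ¬ G.Adj s t)
    (hexa : ∃ n c, IChain G Ca s t n c) (hexb : ∃ n c, IChain G Cb s t n c) :
    ¬ Chordal G := by
  obtain ⟨m, p, ⟨hp0, hpm, hpB, hpA⟩, hm2, hpinj, hpnc⟩ :=
    exists_min_ichain hsa hta hst hnadj hexa
  obtain ⟨r, q, ⟨hq0, hqr, hqB, hqA⟩, hr2, hqinj, hqnc⟩ :=
    exists_min_ichain hsb htb hst hnadj hexb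
  set L := m + r with hLdef
  have hL4 : 4 ≤ L := by omega
  set c : ℕ → V := fun k => if k ≤ m then p k else q (L - k) with hcdef
  have hc1 : ∀ k, k ≤ m → c k = p k := fun k hk => by simp only [hcdef, if_pos hk]
  have hc2 : ∀ k, m ≤ k → c k = q (L - k) := by
    intro k hk
    by_cases h : k ≤ m
    · have hkm : k = m := le_antisymm h hk
      subst hkm
      simp only [hcdef, if_pos le_rfl]
      rw [hpm, show L - k = r by omega, hqr]
    · simp only [hcdef, if_neg h]
  have key : ∀ i j, i < j → j < L → c i ≠ c j := by
    intro i j hij hjL hEq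
    rcases Nat.lt_or_ge m j with hmj | hjm
    · rcases Nat.lt_or_ge i m with him | hmi
      · rw [hc1 i (by omega), hc2 j (by omega)] at hEq
        have hqj : q (L - j) ∈ Cb := hqB (L - j) (by omega) (by omega)
        rw [← hEq] at hqj
        rcases Nat.eq_zero_or_pos i with h0 | h0
        · rw [h0, hp0] at hqj; exact hsb hqj
        · exact hdisj (p i) (hpB i h0 him) hqj
      · rw [hc2 i hmi, hc2 j (by omega)] at hEq
        have := hqinj (L - i) (L - j) (by omega) (by omega) hEq
        omega
    · rw [hc1 i (by omega), hc1 j hjm] at hEq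
      have := hpinj i j (by omega) hjm hEq
      omega
  have hinj : ∀ i j, i < L → j < L → c i = c j → i = j := by
    intro i j hi hj hEq
    rcases lt_trichotomy i j with h | h | h
    · exact absurd hEq (key i j h hj)
    · exact h
    · exact absurd hEq.symm (key j i h hi)
  have hforward : ∀ i j, i < j → j < L →
      (G.Adj (c i) (c j) ↔ (j = i + 1 ∨ (i = 0 ∧ j = L - 1))) := by
    intro i j hij hjL
    rcases Nat.lt_or_ge m j with hmj | hjm
    · rcases Nat.lt_or_ge i m with him | hmi
      · rw [hc1 i (by omega), hc2 j (by omega)]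
        rcases Nat.eq_zero_or_pos i with h0 | h0
        · subst h0
          rw [hp0, ← hq0]
          constructor
          · intro hadj
            right
            refine ⟨rfl, ?_⟩
            by_contra hcon
            exact hqnc 0 (L - j) (by omega) (by omega) hadj
          · rintro (h1 | ⟨h1, h2⟩)
            · exfalso; omega
            · rw [show L - j = 0 + 1 by omega]
              exact hqA 0 (by omega)
        · have hpi : p i ∈ Ca := hpB i h0 him
          have hqj : q (L - j) ∈ Cb := hqB (L - j) (by omega) (by omega)
          constructor
          · intro hadj; exact absurd hadj (hcross _ _ hpi hqj)
          · rintro (h1 | ⟨h1, h2⟩) <;> (exfalso; omega)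
      · rw [hc2 i hmi, hc2 j (by omega)]
        constructor
        · intro hadj
          left
          by_contra hcon
          exact hqnc (L - j) (L - i) (by omega) (by omega) hadj.symm
        · rintro (h1 | ⟨h1, h2⟩)
          · rw [show L - i = (L - j) + 1 by omega]
            exact (hqA (L - j) (by omega)).symm
          · exfalso; omega
    · rw [hc1 i (by omega), hc1 j hjm]
      constructor
      · intro hadj
        left
        by_contra hcon
        exact hpnc i j (by omega) hjm hadj
      · rintro (h1 | ⟨h1, h2⟩)
        · rw [h1]; exact hpA i (by omega)
        · exfalso; omega
  have hiff : ∀ i j, i < L → j < L →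
      (G.Adj (c i) (c j) ↔ (j = i + 1 ∨ i = j + 1 ∨ (i = 0 ∧ j = L - 1) ∨ (j = 0 ∧ i = L - 1))) := by
    intro i j hi hj
    rcases lt_trichotomy i j with h | h | h
    · rw [hforward i j h hj]
      constructor
      · rintro (h1 | ⟨h1, h2⟩)
        · exact Or.inl h1
        · exact Or.inr (Or.inr (Or.inl ⟨h1, h2⟩))
      · rintro (h1 | h1 | ⟨h1, h2⟩ | ⟨h1, h2⟩)
        · exact Or.inl h1
        · exfalso; omega
        · exact Or.inr ⟨h1, h2⟩
        · exfalso; omega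
    · subst h
      constructor
      · intro hadj; exact absurd hadj (G.loopless.irrefl _)
      · rintro (h1 | h1 | ⟨h1, h2⟩ | ⟨h1, h2⟩) <;> (exfalso; omega)
    · rw [G.adj_comm, hforward j i h hi]
      constructor
      · rintro (h1 | ⟨h1, h2⟩)
        · exact Or.inr (Or.inl h1)
        · exact Or.inr (Or.inr (Or.inr ⟨h1, h2⟩))
      · rintro (h1 | h1 | ⟨h1, h2⟩ | ⟨h1, h2⟩)
        · exfalso; omega
        · exact Or.inl h1
        · exfalso; omega
        · exact Or.inr ⟨h1, h2⟩
  exact not_chordal_of_cycle hL4 c hinj hiff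

/-- `v` is simplicial in `A`: its neighbourhood within `A` is a clique. -/
def Simp (G : SimpleGraph V) (A : Set V) (v : V) : Prop :=
  v ∈ A ∧ G.IsClique {x | x ∈ A ∧ G.Adj v x}

theorem dirac_pair (hG : Chordal G) :
    ∀ n : ℕ, ∀ A : Finset V, A.card ≤ n →
      ∀ a ∈ A, ∀ b ∈ A, a ≠ b → ¬ G.Adj a b →
      ∃ v₁ ∈ A, ∃ v₂ ∈ A, v₁ ≠ v₂ ∧ ¬ G.Adj v₁ v₂ ∧ Simp G ↑A v₁ ∧ Simp G ↑A v₂ := by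
  intro n
  induction n with
  | zero =>
    intro A hA a ha _ _ _ _
    exact absurd (Finset.card_pos.mpr ⟨a, ha⟩) (by omega)
  | succ n IH =>
    intro A hcard a ha b hb hab hnadj
    classical
    set A2 := (A.erase a).erase b with hA2
    have hA2A : A2 ⊆ A := (Finset.erase_subset _ _).trans (Finset.erase_subset _ _)
    set P : Finset (Finset V) := A2.powerset.filter (fun S => ¬ Conn G (↑A \ ↑S) a b)
      with hPdef
    have hPne : P.Nonempty := by
      refine ⟨A2, ?_⟩
      rw [hPdef, Finset.mem_filter, Finset.mem_powerset]
      refine ⟨Finset.Subset.refl _, ?_⟩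
      rintro ⟨k, c, h0, hk, hB, hAdj⟩
      have hmem : ∀ i, i ≤ k → c i = a ∨ c i = b := by
        intro i hi
        have hdi := hB i hi
        rw [Set.mem_diff] at hdi
        by_contra hcon
        push_neg at hcon
        exact hdi.2 (Finset.mem_coe.mpr
          (Finset.mem_erase.mpr ⟨hcon.2, Finset.mem_erase.mpr ⟨hcon.1, hdi.1⟩⟩))
      have hk0 : k ≠ 0 := by
        rintro rfl
        exact hab (h0.symm.trans hk)
      have h1 := hAdj 0 (by omega)
      rw [h0] at h1
      rcases hmem 1 (by omega) with h | h
      · rw [h] at h1; exact G.loopless.irrefl a h1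
      · rw [h] at h1; exact hnadj h1
    obtain ⟨S, hSP, hSmin⟩ := Finset.exists_min_image P Finset.card hPne
    rw [hPdef, Finset.mem_filter, Finset.mem_powerset] at hSP
    obtain ⟨hSsub, hnConn⟩ := hSP
    have haS : a ∉ S := by
      intro h
      have := hA2A (hSsub h)
      have h2 := hSsub h
      rw [hA2] at h2
      have := (Finset.mem_erase.mp (Finset.mem_of_mem_erase h2)).1
      exact this rfl
    have hbS : b ∉ S := by
      intro h
      have h2 := hSsub h
      rw [hA2] at h2
      exact (Finset.mem_erase.mp h2).1 rfl
    have hSA : S ⊆ A := hSsub.trans hA2A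
    set D : Set V := ↑A \ ↑S with hDdef
    have haD : a ∈ D := ⟨Finset.mem_coe.mpr ha, fun h => haS (Finset.mem_coe.mp h)⟩
    have hbD : b ∈ D := ⟨Finset.mem_coe.mpr hb, fun h => hbS (Finset.mem_coe.mp h)⟩
    have hminS : ∀ s ∈ S, Conn G (↑A \ ↑(S.erase s)) a b := by
      intro s hs
      by_contra hcon
      have hmem : S.erase s ∈ P := by
        rw [hPdef, Finset.mem_filter, Finset.mem_powerset]
        exact ⟨(Finset.erase_subset _ _).trans hSsub, hcon⟩
      have h1 := hSmin _ hmem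
      have h2 : (S.erase s).card < S.card := Finset.card_erase_lt_of_mem hs
      omega
    have nbr : ∀ s ∈ S, ∀ u w : V, Conn G (↑A \ ↑(S.erase s)) u w → u ∉ S →
        ¬ Conn G D u w → ∃ x, Conn G D u x ∧ G.Adj s x := by
      intro s hs u w hconn huS hnc
      obtain ⟨k, c, h0, hk, hB, hAdj⟩ := hconn
      have hex : ∃ i, i ≤ k ∧ c i ∈ S := by
        by_contra hcon
        push_neg at hcon
        refine hnc ⟨k, c, h0, hk, ?_, hAdj⟩
        intro i hi
        exact ⟨(hB i hi).1, fun hmem => hcon i hi (Finset.mem_coe.mp hmem)⟩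
      have hexQ : ∃ i, c i ∈ S := ⟨hex.choose, hex.choose_spec.2⟩
      set i₁ := Nat.find hexQ with hi₁def
      have hQ1 : c i₁ ∈ S := Nat.find_spec hexQ
      have hQmin : ∀ j, j < i₁ → c j ∉ S := fun j hj => Nat.find_min hexQ hj
      have hi₁k : i₁ ≤ k := (Nat.find_min' hexQ hex.choose_spec.2).trans hex.choose_spec.1
      have hcs : c i₁ = s := by
        have hdi := hB i₁ hi₁k
        rw [Set.mem_diff] at hdi
        by_contra hne
        exact hdi.2 (Finset.mem_coe.mpr (Finset.mem_erase.mpr ⟨hne, hQ1⟩))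
      have hi₁0 : i₁ ≠ 0 := by
        intro h
        rw [h, h0] at hQ1
        exact huS hQ1
      refine ⟨c (i₁ - 1), ⟨i₁ - 1, c, h0, rfl, ?_, ?_⟩, ?_⟩
      · intro i hi
        exact ⟨(hB i (by omega)).1, fun hmem => hQmin i (by omega) (Finset.mem_coe.mp hmem)⟩
      · intro i hi
        exact hAdj i (by omega)
      · have := hAdj (i₁ - 1) (by omega)
        rw [show i₁ - 1 + 1 = i₁ by omega, hcs] at this
        exact this.symm
    have nbrA : ∀ s ∈ S, ∃ x, Conn G D a x ∧ G.Adj s x :=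
      fun s hs => nbr s hs a b (hminS s hs) haS hnConn
    have nbrB : ∀ s ∈ S, ∃ x, Conn G D b x ∧ G.Adj s x :=
      fun s hs => nbr s hs b a (hminS s hs).symm hbS (fun h => hnConn h.symm)
    have hdisjC : ∀ x, Conn G D a x → Conn G D b x → False :=
      fun x h1 h2 => hnConn (h1.trans h2.symm)
    have hSclq : ∀ s ∈ S, ∀ t ∈ S, s ≠ t → G.Adj s t := by
      intro s hs t ht hstne
      by_contra hnadjst
      obtain ⟨xa, hxa, hsxa⟩ := nbrA s hs
      obtain ⟨ya, hya, htya⟩ := nbrA t ht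
      obtain ⟨xb, hxb, hsxb⟩ := nbrB s hs
      obtain ⟨yb, hyb, htyb⟩ := nbrB t ht
      set Ca : Set V := {z | Conn G D a z} with hCa
      set Cb : Set V := {z | Conn G D b z} with hCb
      have hCaD : ∀ z, z ∈ Ca → z ∈ D := fun z hz => hz.mem_right
      have hCbD : ∀ z, z ∈ Cb → z ∈ D := fun z hz => hz.mem_right
      have hcross : ∀ x y, x ∈ Ca → y ∈ Cb → ¬ G.Adj x y := by
        intro x y hx hy hadj
        exact hdisjC y (hx.trans (Conn.adj hadj (hCaD x hx) (hCbD y hy))) hy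
      have hsS : s ∉ D := fun h => h.2 (Finset.mem_coe.mpr hs)
      have htS : t ∉ D := fun h => h.2 (Finset.mem_coe.mpr ht)
      refine not_chordal_two_sides (G := G) (Ca := Ca) (Cb := Cb)
        (fun x hx hy => hdisjC x hx hy) hcross
        (fun h => hsS (hCaD s h)) (fun h => hsS (hCbD s h))
        (fun h => htS (hCaD t h)) (fun h => htS (hCbD t h))
        hstne hnadjst ?_ ?_ hG
      · exact ichain_of_conn hsxa htya.symm (conn_upgrade hxa (hxa.symm.trans hya))
      · exact ichain_of_conn hsxb htyb.symm (conn_upgrade hxb (hxb.symm.trans hyb))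
    have side : ∀ u w : V, u ∈ A → w ∈ A → u ∉ S → w ∉ S → ¬ Conn G D u w →
        ∃ v, Conn G D u v ∧ Simp G ↑A v := by
      intro u w huA hwA huS hwS hnc
      set Fu : Finset V := A.filter (fun x => Conn G D u x) ∪ S with hFu
      have huD : u ∈ D := ⟨Finset.mem_coe.mpr huA, fun h => huS (Finset.mem_coe.mp h)⟩
      have hmemFu : ∀ x, x ∈ Fu ↔ (Conn G D u x ∨ x ∈ S) := by
        intro x
        rw [hFu, Finset.mem_union, Finset.mem_filter]
        constructor
        · rintro (⟨_, h⟩ | h)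
          · exact Or.inl h
          · exact Or.inr h
        · rintro (h | h)
          · exact Or.inl ⟨Finset.mem_coe.mp h.mem_right.1, h⟩
          · exact Or.inr h
      have hFuA : Fu ⊆ A := by
        intro x hx
        rcases (hmemFu x).mp hx with h | h
        · exact Finset.mem_coe.mp h.mem_right.1
        · exact hSA h
      have hwFu : w ∉ Fu := by
        intro h
        rcases (hmemFu w).mp h with h | h
        · exact hnc h
        · exact hwS h
      have hcardFu : Fu.card ≤ n := by
        have h1 : Fu ⊆ A.erase w := by
          intro x hx
          exact Finset.mem_erase.mpr ⟨fun h => hwFu (h ▸ hx), hFuA hx⟩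
        have h2 := Finset.card_le_card h1
        have h3 := Finset.card_erase_of_mem hwA
        omega
      have huFu : u ∈ Fu := (hmemFu u).mpr (Or.inl (Conn.refl huD))
      -- the neighbourhood-in-A of a vertex of the component lies inside Fu
      have hnbhd : ∀ v, Conn G D u v → ∀ x, x ∈ A → G.Adj v x → x ∈ Fu := by
        intro v hv x hxA hadj
        by_cases hxS : x ∈ S
        · exact (hmemFu x).mpr (Or.inr hxS)
        · have hxD : x ∈ D := ⟨Finset.mem_coe.mpr hxA, fun h => hxS (Finset.mem_coe.mp h)⟩
          exact (hmemFu x).mpr (Or.inl (hv.trans (Conn.adj hadj (hv.mem_right) hxD)))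
      by_cases hcompl : ∃ x ∈ Fu, ∃ y ∈ Fu, x ≠ y ∧ ¬ G.Adj x y
      · obtain ⟨x, hx, y, hy, hxy, hnxy⟩ := hcompl
        obtain ⟨v₁, hv₁, v₂, hv₂, hv12, hnadj12, hs1, hs2⟩ := IH Fu hcardFu x hx y hy hxy hnxy
        have hnotboth : v₁ ∉ S ∨ v₂ ∉ S := by
          by_contra hcon
          push_neg at hcon
          exact hnadj12 (hSclq v₁ hcon.1 v₂ hcon.2 hv12)
        have main : ∀ v, v ∈ Fu → v ∉ S → Simp G ↑Fu v → ∃ v', Conn G D u v' ∧ Simp G ↑A v' := by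
          intro v hvF hvS hsimp
          have hvC : Conn G D u v := by
            rcases (hmemFu v).mp hvF with h | h
            · exact h
            · exact absurd h hvS
          refine ⟨v, hvC, hvC.mem_right.1, ?_⟩
          have hseteq : {x | x ∈ (↑A : Set V) ∧ G.Adj v x} = {x | x ∈ (↑Fu : Set V) ∧ G.Adj v x} := by
            ext x
            simp only [Set.mem_setOf_eq]
            constructor
            · rintro ⟨hxA, hadj⟩
              exact ⟨Finset.mem_coe.mpr (hnbhd v hvC x (Finset.mem_coe.mp hxA) hadj), hadj⟩
            · rintro ⟨hxF, hadj⟩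
              exact ⟨Finset.mem_coe.mpr (hFuA (Finset.mem_coe.mp hxF)), hadj⟩
          rw [hseteq]
          exact hsimp.2
        rcases hnotboth with h | h
        · exact main v₁ hv₁ h hs1
        · exact main v₂ hv₂ h hs2
      · push_neg at hcompl
        refine ⟨u, Conn.refl huD, Finset.mem_coe.mpr huA, ?_⟩
        intro x hx y hy hxy
        simp only [Set.mem_setOf_eq] at hx hy
        have hxF : x ∈ Fu := hnbhd u (Conn.refl huD) x (Finset.mem_coe.mp hx.1) hx.2
        have hyF : y ∈ Fu := hnbhd u (Conn.refl huD) y (Finset.mem_coe.mp hy.1) hy.2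
        exact hcompl x hxF y hyF hxy
    obtain ⟨va, hvaC, hvaS⟩ := side a b ha hb haS hbS hnConn
    obtain ⟨vb, hvbC, hvbS⟩ := side b a hb ha hbS haS (fun h => hnConn h.symm)
    have hvab : va ≠ vb := by
      rintro rfl
      exact hdisjC va hvaC hvbC
    have hvnadj : ¬ G.Adj va vb := by
      intro hadj
      exact hdisjC vb (hvaC.trans (Conn.adj hadj hvaC.mem_right hvbC.mem_right)) hvbC
    exact ⟨va, hvaC.mem_right.1, vb, hvbC.mem_right.1, hvab, hvnadj, hvaS, hvbS⟩

theorem dirac_simp (hG : Chordal G) (A : Finset V) (hA : A.Nonempty) :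
    ∃ v ∈ A, Simp G ↑A v := by
  classical
  by_cases h : ∃ x ∈ A, ∃ y ∈ A, x ≠ y ∧ ¬ G.Adj x y
  · obtain ⟨x, hx, y, hy, hxy, hnxy⟩ := h
    obtain ⟨v₁, hv₁, _, _, _, _, hs1, _⟩ := dirac_pair hG A.card A le_rfl x hx y hy hxy hnxy
    exact ⟨v₁, hv₁, hs1⟩
  · push_neg at h
    obtain ⟨v, hv⟩ := hA
    refine ⟨v, hv, Finset.mem_coe.mpr hv, ?_⟩
    intro x hx y hy hxy
    simp only [Set.mem_setOf_eq] at hx hy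
    exact h x (Finset.mem_coe.mp hx.1) y (Finset.mem_coe.mp hy.1) hxy


section TreeExt

variable {α : Type*} (T : SimpleGraph α) (i₀ : α)

/-- Attach a new leaf `none` to the vertex `i₀` of `T`. -/
def extG : SimpleGraph (Option α) where
  Adj x y := (∃ a b, x = some a ∧ y = some b ∧ T.Adj a b) ∨
    (x = none ∧ y = some i₀) ∨ (x = some i₀ ∧ y = none)
  symm := by
    constructor
    rintro x y (⟨a, b, rfl, rfl, h⟩ | ⟨rfl, rfl⟩ | ⟨rfl, rfl⟩)
    · exact Or.inl ⟨b, a, rfl, rfl, h.symm⟩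
    · exact Or.inr (Or.inr ⟨rfl, rfl⟩)
    · exact Or.inr (Or.inl ⟨rfl, rfl⟩)
  loopless := by
    constructor
    rintro x (⟨a, b, rfl, h2, h⟩ | ⟨rfl, h⟩ | ⟨h, h2⟩)
    · rw [Option.some.injEq] at h2
      exact T.loopless.irrefl a (h2 ▸ h)
    · exact nomatch h
    · rw [h] at h2; exact nomatch h2

def extHom : T →g extG T i₀ where
  toFun := some
  map_rel' := fun h => Or.inl ⟨_, _, rfl, rfl, h⟩

lemma ext_nbr_none {z : Option α} (h : (extG T i₀).Adj none z) : z = some i₀ := by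
  rcases h with ⟨a, b, h1, _, _⟩ | ⟨_, h2⟩ | ⟨h1, _⟩
  · exact nomatch h1
  · exact h2
  · exact nomatch h1

lemma ext_pullback0 : ∀ {x y : Option α} (p : (extG T i₀).Walk x y) (a b : α)
    (hx : x = some a) (hy : y = some b), none ∉ p.support →
    ∃ q : T.Walk a b, q.map (extHom T i₀) = p.copy hx hy := by
  intro x y p
  induction p with
  | nil =>
    intro a b hx hy hn
    subst hx
    obtain rfl : a = b := Option.some_injective _ hy
    exact ⟨SimpleGraph.Walk.nil, rfl⟩
  | @cons x z y h p ih =>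
    intro a b hx hy hn
    subst hx
    subst hy
    rw [SimpleGraph.Walk.support_cons] at hn
    have hz : ∃ c, z = some c := by
      cases z with
      | none => exact absurd (List.mem_cons_of_mem _ p.start_mem_support) hn
      | some c => exact ⟨c, rfl⟩
    obtain ⟨c, rfl⟩ := hz
    have hadj : T.Adj a c := by
      rcases h with ⟨a', b', h1, h2, h3⟩ | ⟨h1, _⟩ | ⟨_, h2⟩
      · rw [Option.some.injEq] at h1 h2
        rw [h1, h2]; exact h3
      · exact nomatch h1
      · exact nomatch h2
    obtain ⟨q, hq⟩ := ih c b rfl rfl (fun hmem => hn (List.mem_cons_of_mem _ hmem))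
    rw [SimpleGraph.Walk.copy_rfl_rfl] at hq
    refine ⟨SimpleGraph.Walk.cons hadj q, ?_⟩
    rw [SimpleGraph.Walk.copy_rfl_rfl, SimpleGraph.Walk.map_cons, hq]
    rfl

lemma ext_pullback {a b : α} (p : (extG T i₀).Walk (some a) (some b))
    (hn : none ∉ p.support) : ∃ q : T.Walk a b, q.map (extHom T i₀) = p := by
  obtain ⟨q, hq⟩ := ext_pullback0 T i₀ p a b rfl rfl hn
  rw [SimpleGraph.Walk.copy_rfl_rfl] at hq
  exact ⟨q, hq⟩

lemma ext_from_none (z : Option α) (w : (extG T i₀).Walk none z) (hz : z ≠ none) :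
    some i₀ ∈ w.support.tail := by
  cases w with
  | nil => exact absurd rfl hz
  | cons h q =>
    have := ext_nbr_none T i₀ h
    subst this
    rw [SimpleGraph.Walk.support_cons]
    exact q.start_mem_support

lemma ext_isTree (hT : T.IsTree) : (extG T i₀).IsTree := by
  rw [SimpleGraph.isTree_iff_existsUnique_path] at hT ⊢
  obtain ⟨hne, huniqT⟩ := hT
  have hinj : Function.Injective (extHom T i₀ : T →g extG T i₀) :=
    fun a b h => Option.some_injective _ h
  -- no path between `some`s passes through `none`
  have hno_none : ∀ (a b : α) (p : (extG T i₀).Walk (some a) (some b)),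
      p.IsPath → none ∉ p.support := by
    intro a b p hp hmem
    have hps := SimpleGraph.Walk.take_spec p hmem
    set p₁ := p.takeUntil none hmem with hp₁
    set p₂ := p.dropUntil none hmem with hp₂
    have hnodup : (p₁.support ++ p₂.support.tail).Nodup := by
      rw [← SimpleGraph.Walk.support_append, hps]
      exact (SimpleGraph.Walk.isPath_def p).mp hp
    have hm2 : some i₀ ∈ p₂.support.tail :=
      ext_from_none T i₀ _ p₂ (fun h => nomatch h)
    have hm1 : some i₀ ∈ p₁.support := by
      have h1 : some i₀ ∈ p₁.reverse.support.tail :=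
        ext_from_none T i₀ _ p₁.reverse (fun h => nomatch h)
      have h2 : some i₀ ∈ p₁.reverse.support := List.mem_of_mem_tail h1
      rwa [SimpleGraph.Walk.support_reverse, List.mem_reverse] at h2
    exact (List.disjoint_of_nodup_append hnodup) hm1 hm2
  have hss : ∀ (a b : α) (p q : (extG T i₀).Walk (some a) (some b)),
      p.IsPath → q.IsPath → p = q := by
    intro a b p q hp hq
    obtain ⟨p', hp'⟩ := ext_pullback T i₀ p (hno_none a b p hp)
    obtain ⟨q', hq'⟩ := ext_pullback T i₀ q (hno_none a b q hq)
    have hp'path : p'.IsPath := by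
      rw [← SimpleGraph.Walk.map_isPath_iff_of_injective hinj]
      rw [hp']; exact hp
    have hq'path : q'.IsPath := by
      rw [← SimpleGraph.Walk.map_isPath_iff_of_injective hinj]
      rw [hq']; exact hq
    have := (huniqT a b).unique hp'path hq'path
    rw [← hp', ← hq', this]
  have hnn : ∀ (p : (extG T i₀).Walk none none), p.IsPath → p = SimpleGraph.Walk.nil := by
    intro p hp
    cases p with
    | nil => rfl
    | cons h q =>
      exfalso
      rw [SimpleGraph.Walk.cons_isPath_iff] at hp
      exact hp.2 q.end_mem_support
  have hns : ∀ (b : α) (p q : (extG T i₀).Walk none (some b)),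
      p.IsPath → q.IsPath → p = q := by
    intro b p q hp hq
    cases p with
    | cons h p' =>
      cases q with
      | cons h' q' =>
        have h1 := ext_nbr_none T i₀ h
        have h2 := ext_nbr_none T i₀ h'
        subst h1; subst h2
        have : p' = q' := hss i₀ b p' q' hp.of_cons hq.of_cons
        subst this
        rfl
  have huniq : ∀ (x y : Option α) (p q : (extG T i₀).Walk x y),
      p.IsPath → q.IsPath → p = q := by
    intro x y p q hp hq
    match x, y with
    | some a, some b => exact hss a b p q hp hq
    | none, some b => exact hns b p q hp hq
    | some a, none =>
      have := hns a p.reverse q.reverse hp.reverse hq.reverse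
      have h2 := congrArg SimpleGraph.Walk.reverse this
      rwa [SimpleGraph.Walk.reverse_reverse, SimpleGraph.Walk.reverse_reverse] at h2
    | none, none => rw [hnn p hp, hnn q hq]
  have hreach : ∀ x y : Option α, Nonempty ((extG T i₀).Walk x y) := by
    have hTreach : ∀ a b : α, Nonempty (T.Walk a b) := fun a b => ⟨((huniqT a b).exists).choose⟩
    have eN : (extG T i₀).Adj none (some i₀) := Or.inr (Or.inl ⟨rfl, rfl⟩)
    intro x y
    match x, y with
    | some a, some b => exact ⟨(hTreach a b).some.map (extHom T i₀)⟩
    | none, some b => exact ⟨SimpleGraph.Walk.cons eN ((hTreach i₀ b).some.map (extHom T i₀))⟩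
    | some a, none => exact ⟨(SimpleGraph.Walk.cons eN ((hTreach i₀ a).some.map (extHom T i₀))).reverse⟩
    | none, none => exact ⟨SimpleGraph.Walk.nil⟩
  refine ⟨⟨none⟩, ?_⟩
  intro x y
  classical
  obtain ⟨w⟩ := hreach x y
  exact ⟨(w.toPath : (extG T i₀).Path x y).1, (w.toPath).2,
    fun q hq => huniq x y q _ hq (w.toPath).2⟩

end TreeExt


section CliqueTree

variable [Fintype V]

lemma exists_maxCliqueIn_superset {A : Finset V} {C : Set V} (hCA : C ⊆ ↑A)
    (hC : G.IsClique C) : ∃ D, MaxCliqueIn G ↑A D ∧ C ⊆ D := by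
  classical
  set 𝒟 : Finset (Finset V) :=
    Finset.univ.filter (fun D : Finset V => ↑D ⊆ (↑A : Set V) ∧ G.IsClique ↑D ∧ C ⊆ ↑D)
    with h𝒟
  have hne : 𝒟.Nonempty := by
    refine ⟨C.toFinset, ?_⟩
    rw [h𝒟, Finset.mem_filter]
    refine ⟨Finset.mem_univ _, ?_⟩
    rw [Set.coe_toFinset]
    exact ⟨hCA, hC, subset_rfl⟩
  obtain ⟨D, hD, hDmax⟩ := Finset.exists_max_image 𝒟 Finset.card hne
  rw [h𝒟, Finset.mem_filter] at hD
  obtain ⟨-, hDA, hDclq, hCD⟩ := hD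
  refine ⟨↑D, ⟨hDA, hDclq, ?_⟩, hCD⟩
  intro E hEA hEclq hDE
  have hEfin : E.toFinset ∈ 𝒟 := by
    rw [h𝒟, Finset.mem_filter]
    refine ⟨Finset.mem_univ _, ?_⟩
    rw [Set.coe_toFinset]
    exact ⟨hEA, hEclq, hCD.trans hDE⟩
  have hsub : D ⊆ E.toFinset := by
    intro x hx
    rw [Set.mem_toFinset]
    exact hDE (Finset.mem_coe.mpr hx)
  have hcard := hDmax _ hEfin
  have heq := Finset.eq_of_subset_of_card_le hsub hcard
  rw [heq, Set.coe_toFinset]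

lemma maxCliqueIn_univ_iff {C : Set V} :
    MaxCliqueIn G Set.univ C ↔ MaxClique G C := by
  constructor
  · rintro ⟨_, hclq, hmax⟩
    exact ⟨hclq, fun D hD hCD => hmax D (Set.subset_univ D) hD hCD⟩
  · rintro ⟨hclq, hmax⟩
    exact ⟨Set.subset_univ C, hclq, fun D _ hD hCD => hmax D hD hCD⟩

theorem exists_cliquetree (hG : Chordal G) :
    ∀ (n : ℕ) (A : Finset V), A.card ≤ n →
    ∃ (ι : Type) (_ : Fintype ι) (_ : Nonempty ι) (cl : ι → Set V) (T : SimpleGraph ι),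
      Function.Injective cl ∧ (∀ i, MaxCliqueIn G ↑A (cl i)) ∧
      (∀ C, MaxCliqueIn G ↑A C → ∃ i, cl i = C) ∧ T.IsTree ∧
      (∀ u i j, u ∈ cl i → u ∈ cl j → ∃ p : T.Walk i j, ∀ k ∈ p.support, u ∈ cl k) := by
  classical
  have hempty : ∀ (A : Finset V), A = ∅ →
      ∃ (ι : Type) (_ : Fintype ι) (_ : Nonempty ι) (cl : ι → Set V) (T : SimpleGraph ι),
      Function.Injective cl ∧ (∀ i, MaxCliqueIn G ↑A (cl i)) ∧
      (∀ C, MaxCliqueIn G ↑A C → ∃ i, cl i = C) ∧ T.IsTree ∧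
      (∀ u i j, u ∈ cl i → u ∈ cl j → ∃ p : T.Walk i j, ∀ k ∈ p.support, u ∈ cl k) := by
    rintro A rfl
    have hmax : MaxCliqueIn G (↑(∅ : Finset V)) (∅ : Set V) := by
      refine ⟨by simp, by simp [SimpleGraph.isClique_empty], ?_⟩
      intro D hD _ _
      rw [Finset.coe_empty] at hD
      exact (Set.subset_empty_iff.mp hD).symm
    refine ⟨PUnit, inferInstance, ⟨PUnit.unit⟩, fun _ => (∅ : Set V), ⊥,
      fun x y _ => Subsingleton.elim x y, fun _ => hmax, ?_, ?_, ?_⟩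
    · intro C hC
      refine ⟨PUnit.unit, ?_⟩
      rw [Finset.coe_empty] at hC
      exact (Set.subset_empty_iff.mp hC.1).symm
    · rw [SimpleGraph.isTree_iff_existsUnique_path]
      refine ⟨⟨PUnit.unit⟩, ?_⟩
      intro v w
      have hvw : v = w := Subsingleton.elim v w
      subst hvw
      refine ⟨SimpleGraph.Walk.nil, SimpleGraph.Walk.IsPath.nil, ?_⟩
      intro q hq
      cases q with
      | nil => rfl
      | cons h _ => exact absurd h (by simp)
    · intro u i j hui huj
      have hij : i = j := Subsingleton.elim i j
      subst hij
      refine ⟨SimpleGraph.Walk.nil, ?_⟩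
      intro k hk
      rw [SimpleGraph.Walk.support_nil, List.mem_singleton] at hk
      subst hk
      exact hui
  intro n
  induction n with
  | zero =>
    intro A hA
    exact hempty A (Finset.card_eq_zero.mp (by omega))
  | succ n IH =>
    intro A hcard
    rcases A.eq_empty_or_nonempty with rfl | hAne
    · exact hempty ∅ rfl
    obtain ⟨v, hvA, hsimp⟩ := dirac_simp hG A hAne
    set A' := A.erase v with hA'def
    have hA'card : A'.card ≤ n := by
      have h1 : A'.card = A.card - 1 := Finset.card_erase_of_mem hvA
      have h2 : 0 < A.card := Finset.card_pos.mpr hAne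
      omega
    obtain ⟨ι', instF, instN, cl', T', hinj', hmax', hsurj', htree', hjunc'⟩ := IH A' hA'card
    set N : Set V := {x | x ∈ (↑A : Set V) ∧ G.Adj v x} with hNdef
    have hNclq : G.IsClique N := hsimp.2
    have hvN : v ∉ N := fun h => G.loopless.irrefl v h.2
    have hcoeA' : (↑A' : Set V) = ↑A \ {v} := by rw [hA'def, Finset.coe_erase]
    have hNA' : N ⊆ ↑A' := by
      intro x hx
      rw [hcoeA']
      exact ⟨hx.1, fun h => hvN ((Set.mem_singleton_iff.mp h) ▸ hx)⟩
    have hA'A : (↑A' : Set V) ⊆ ↑A := by rw [hcoeA']; exact Set.diff_subset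
    set Cv : Set V := insert v N with hCvdef
    have hCvclq : G.IsClique Cv := by
      refine hNclq.insert ?_
      intro b hb _
      exact hb.2
    have hCvA : Cv ⊆ ↑A := by
      rintro x (rfl | hx)
      · exact Finset.mem_coe.mpr hvA
      · exact hx.1
    have hCvmax : MaxCliqueIn G ↑A Cv := by
      refine ⟨hCvA, hCvclq, ?_⟩
      intro E hEA hEclq hCvE
      refine Set.Subset.antisymm hCvE ?_
      intro x hx
      by_cases hxv : x = v
      · subst hxv; exact Set.mem_insert _ _
      · have hadj : G.Adj v x := hEclq (hCvE (Set.mem_insert _ _)) hx (fun h => hxv h.symm)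
        exact Set.mem_insert_of_mem _ ⟨hEA hx, hadj⟩
    have hf1 : ∀ C, MaxCliqueIn G ↑A C → v ∈ C → C = Cv := by
      intro C hC hvC
      have hsub : C ⊆ Cv := by
        intro x hx
        by_cases hxv : x = v
        · subst hxv; exact Set.mem_insert _ _
        · have hadj : G.Adj v x := hC.2.1 hvC hx (fun h => hxv h.symm)
          exact Set.mem_insert_of_mem _ ⟨hC.1 hx, hadj⟩
      exact hC.2.2 Cv hCvA hCvclq hsub
    have hf2 : ∀ C, MaxCliqueIn G ↑A C → v ∉ C → MaxCliqueIn G ↑A' C := by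
      intro C hC hvC
      refine ⟨?_, hC.2.1, ?_⟩
      · intro x hx
        rw [hcoeA']
        exact ⟨hC.1 hx, fun h => hvC ((Set.mem_singleton_iff.mp h) ▸ hx)⟩
      · intro E hEA' hEclq hCE
        exact hC.2.2 E (hEA'.trans hA'A) hEclq hCE
    have hf3 : ∀ D, MaxCliqueIn G ↑A' D → D ≠ N → MaxCliqueIn G ↑A D := by
      intro D hD hDN
      have hDnsubN : ¬ D ⊆ N := fun hsub => hDN (hD.2.2 N hNA' hNclq hsub)
      obtain ⟨d, hdD, hdN⟩ := Set.not_subset.mp hDnsubN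
      refine ⟨hD.1.trans hA'A, hD.2.1, ?_⟩
      intro E hEA hEclq hDE
      have hvE : v ∉ E := by
        intro hvE
        have hdE := hDE hdD
        have hdv : d ≠ v := by
          intro h
          have h2 := hD.1 hdD
          rw [hcoeA'] at h2
          exact h2.2 (h ▸ rfl)
        have hadj : G.Adj v d := hEclq hvE hdE (fun h => hdv h.symm)
        exact hdN ⟨hA'A (hD.1 hdD), hadj⟩
      have hEA' : E ⊆ ↑A' := by
        intro x hx
        rw [hcoeA']
        exact ⟨hEA hx, fun h => hvE ((Set.mem_singleton_iff.mp h) ▸ hx)⟩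
      exact hD.2.2 E hEA' hEclq hDE
    have hclA' : ∀ i, cl' i ⊆ ↑A' := fun i => (hmax' i).1
    have hvcl' : ∀ i, v ∉ cl' i := by
      intro i h
      have := hclA' i h
      rw [hcoeA'] at this
      exact this.2 rfl
    by_cases hNmax : MaxCliqueIn G ↑A' N
    · -- Case (a): replace the clique `N` by `Cv`
      obtain ⟨i₀, hi₀⟩ := hsurj' N hNmax
      set cl : ι' → Set V := Function.update cl' i₀ Cv with hcldef
      have hupd : ∀ i, cl i = if i = i₀ then Cv else cl' i := fun i => Function.update_apply cl' i₀ Cv i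
      have hclup : ∀ i, i ≠ i₀ → cl i = cl' i := by
        intro i hi; rw [hupd, if_neg hi]
      have hcli₀ : cl i₀ = Cv := by rw [hupd, if_pos rfl]
      refine ⟨ι', instF, instN, cl, T', ?_, ?_, ?_, htree', ?_⟩
      · intro i j h
        by_cases hi : i = i₀ <;> by_cases hj : j = i₀
        · rw [hi, hj]
        · subst hi
          rw [hcli₀, hclup j hj] at h
          exact absurd (hvcl' j) (by rw [← h]; exact fun hc => hc (Set.mem_insert _ _))
        · subst hj
          rw [hcli₀, hclup i hi] at h
          exact absurd (hvcl' i) (by rw [h]; exact fun hc => hc (Set.mem_insert _ _))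
        · rw [hclup i hi, hclup j hj] at h
          exact hinj' h
      · intro i
        by_cases hi : i = i₀
        · subst hi; rw [hcli₀]; exact hCvmax
        · rw [hclup i hi]
          refine hf3 (cl' i) (hmax' i) ?_
          intro h
          exact hi (hinj' (h.trans hi₀.symm))
      · intro C hC
        by_cases hvC : v ∈ C
        · exact ⟨i₀, by rw [hcli₀, hf1 C hC hvC]⟩
        · obtain ⟨i, hi⟩ := hsurj' C (hf2 C hC hvC)
          have hii₀ : i ≠ i₀ := by
            intro h
            subst h
            rw [hi₀] at hi
            subst hi
            have hsub : N ⊆ Cv := Set.subset_insert _ _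
            have heq := hC.2.2 Cv hCvA hCvclq hsub
            exact hvC (by rw [heq]; exact Set.mem_insert _ _)
          exact ⟨i, by rw [hclup i hii₀, hi]⟩
      · intro u i j hui huj
        by_cases huv : u = v
        · subst huv
          have hii : i = i₀ := by
            by_contra h
            rw [hclup i h] at hui
            exact hvcl' i hui
          have hjj : j = i₀ := by
            by_contra h
            rw [hclup j h] at huj
            exact hvcl' j huj
          subst hii; subst hjj
          refine ⟨SimpleGraph.Walk.nil, ?_⟩
          intro k hk
          rw [SimpleGraph.Walk.support_nil, List.mem_singleton] at hk
          subst hk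
          exact hui
        · have hdown : ∀ k, u ∈ cl k → u ∈ cl' k := by
            intro k hk
            by_cases hki : k = i₀
            · subst hki
              rw [hcli₀] at hk
              rcases hk with h | h
              · exact absurd h huv
              · rw [hi₀]; exact h
            · rwa [hclup k hki] at hk
          have hup : ∀ k, u ∈ cl' k → u ∈ cl k := by
            intro k hk
            by_cases hki : k = i₀
            · subst hki
              rw [hcli₀]
              rw [hi₀] at hk
              exact Set.mem_insert_of_mem _ hk
            · rwa [hclup k hki]
          obtain ⟨p, hp⟩ := hjunc' u i j (hdown i hui) (hdown j huj)
          exact ⟨p, fun k hk => hup k (hp k hk)⟩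
    · -- Case (b): attach `Cv` as a new leaf
      obtain ⟨D0, hD0max, hND0⟩ := exists_maxCliqueIn_superset hNA' hNclq
      obtain ⟨i₀, hi₀⟩ := hsurj' D0 hD0max
      set cl : Option ι' → Set V := fun o => o.elim Cv cl' with hcldef
      have hclnone : cl none = Cv := rfl
      have hclsome : ∀ i, cl (some i) = cl' i := fun i => rfl
      refine ⟨Option ι', inferInstance, ⟨none⟩, cl, extG T' i₀, ?_, ?_, ?_,
        ext_isTree T' i₀ htree', ?_⟩
      · intro o o' h
        match o, o' with
        | none, none => rfl
        | none, some i =>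
          rw [hclnone, hclsome] at h
          exact absurd (hvcl' i) (by rw [← h]; exact fun hc => hc (Set.mem_insert _ _))
        | some i, none =>
          rw [hclnone, hclsome] at h
          exact absurd (hvcl' i) (by rw [h]; exact fun hc => hc (Set.mem_insert _ _))
        | some i, some j => exact congrArg some (hinj' h)
      · intro o
        match o with
        | none => exact hCvmax
        | some i =>
          refine hf3 (cl' i) (hmax' i) ?_
          intro h
          exact hNmax (h ▸ hmax' i)
      · intro C hC
        by_cases hvC : v ∈ C
        · exact ⟨none, by rw [hclnone, hf1 C hC hvC]⟩
        · obtain ⟨i, hi⟩ := hsurj' C (hf2 C hC hvC)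
          exact ⟨some i, hi⟩
      · intro u i j hui huj
        by_cases huv : u = v
        · subst huv
          have hii : i = none := by
            match i with
            | none => rfl
            | some k => exact absurd hui (hvcl' k)
          have hjj : j = none := by
            match j with
            | none => rfl
            | some k => exact absurd huj (hvcl' k)
          subst hii; subst hjj
          refine ⟨SimpleGraph.Walk.nil, ?_⟩
          intro k hk
          rw [SimpleGraph.Walk.support_nil, List.mem_singleton] at hk
          subst hk
          exact hui
        · have hidx : ∀ (o : Option ι'), u ∈ cl o →
              ∃ k, u ∈ cl' k ∧ (o = some k ∨ (o = none ∧ k = i₀)) := by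
            intro o ho
            match o with
            | some k => exact ⟨k, ho, Or.inl rfl⟩
            | none =>
              rcases ho with h | h
              · exact absurd h huv
              · exact ⟨i₀, by rw [hi₀]; exact hND0 h, Or.inr ⟨rfl, rfl⟩⟩
          obtain ⟨ki, hki, hoi⟩ := hidx i hui
          obtain ⟨kj, hkj, hoj⟩ := hidx j huj
          obtain ⟨p', hp'⟩ := hjunc' u ki kj hki hkj
          have eN : (extG T' i₀).Adj none (some i₀) := Or.inr (Or.inl ⟨rfl, rfl⟩)
          have eS : (extG T' i₀).Adj (some i₀) none := Or.inr (Or.inr ⟨rfl, rfl⟩)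
          set base : (extG T' i₀).Walk (some ki) (some kj) := p'.map (extHom T' i₀) with hbase
          have hbase_supp : ∀ k ∈ base.support, u ∈ cl k := by
            intro k hk
            replace hk : k ∈ (p'.map (extHom T' i₀)).support := hk
            rw [SimpleGraph.Walk.support_map] at hk
            obtain ⟨k', hk', rfl⟩ := List.mem_map.mp hk
            exact hp' k' hk'
          rcases hoi with rfl | ⟨rfl, rfl⟩
          · rcases hoj with rfl | ⟨rfl, rfl⟩
            · exact ⟨base, hbase_supp⟩
            · refine ⟨base.concat eS, ?_⟩
              intro k hk
              rw [SimpleGraph.Walk.support_concat, List.mem_append] at hk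
              rcases hk with hk | hk
              · exact hbase_supp k hk
              · rw [List.mem_singleton] at hk
                subst hk
                exact huj
          · rcases hoj with rfl | ⟨rfl, rfl⟩
            · refine ⟨SimpleGraph.Walk.cons eN base, ?_⟩
              intro k hk
              rw [SimpleGraph.Walk.support_cons, List.mem_cons] at hk
              rcases hk with rfl | hk
              · exact hui
              · exact hbase_supp k hk
            · refine ⟨SimpleGraph.Walk.cons eN (base.concat eS), ?_⟩
              intro k hk
              rw [SimpleGraph.Walk.support_cons, List.mem_cons] at hk
              rcases hk with rfl | hk
              · exact hui
              · rw [SimpleGraph.Walk.support_concat, List.mem_append] at hk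
                rcases hk with hk | hk
                · exact hbase_supp k hk
                · rw [List.mem_singleton] at hk
                  subst hk
                  exact hui

end CliqueTree


section Greedy

variable [Fintype V] {ι : Type} [Fintype ι] {cl : ι → Set V} {T : SimpleGraph ι}

/-- Core structural lemma: a shortest path from `k` to the connected set `W`
meets `W` only in its endpoint, and every vertex on it lies in all cliques
common to `cl k` and a clique of `W`. -/
lemma tree_core (htree : T.IsTree)
    (hjunc : ∀ u i j, u ∈ cl i → u ∈ cl j → ∃ p : T.Walk i j, ∀ x ∈ p.support, u ∈ cl x)
    (W : Finset ι)
    (hWconn : ∀ i ∈ W, ∀ j ∈ W, ∃ p : T.Walk i j, ∀ x ∈ p.support, x ∈ W)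
    (k : ι) (hkW : k ∉ W) (d : ℕ)
    (hdex : ∃ w ∈ W, ∃ p : T.Walk k w, p.IsPath ∧ p.length = d)
    (hdmin : ∀ d', d' < d → ¬ ∃ w ∈ W, ∃ p : T.Walk k w, p.IsPath ∧ p.length = d') :
    ∃ w ∈ W, ∃ p : T.Walk k w, p.IsPath ∧ p.length = d ∧
      (∀ x ∈ p.support, x ≠ w → x ∉ W) ∧
      (∀ j ∈ W, ∀ x ∈ p.support, ∀ u, u ∈ cl k → u ∈ cl j → u ∈ cl x) := by
  classical
  obtain ⟨w, hw, p, hppath, hplen⟩ := hdex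
  have huniq := (SimpleGraph.isTree_iff_existsUnique_path.mp htree).2
  have hc1 : ∀ x ∈ p.support, x ≠ w → x ∉ W := by
    intro x hx hxw hxW
    have hspec := SimpleGraph.Walk.take_spec p hx
    have hlen := congrArg SimpleGraph.Walk.length hspec
    rw [SimpleGraph.Walk.length_append] at hlen
    have hdrop : 1 ≤ (p.dropUntil x hx).length := by
      by_contra hcon
      have h0 : (p.dropUntil x hx).length = 0 := by omega
      exact hxw (SimpleGraph.Walk.eq_of_length_eq_zero h0)
    exact hdmin (p.takeUntil x hx).length (by omega)
      ⟨x, hxW, p.takeUntil x hx, hppath.takeUntil hx, rfl⟩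
  refine ⟨w, hw, p, hppath, hplen, hc1, ?_⟩
  intro j hj x hx u huk huj
  obtain ⟨r, hrW⟩ := hWconn w hw j hj
  set rp : T.Walk w j := (r.toPath : T.Path w j).1 with hrp
  have hrpPath : rp.IsPath := (r.toPath).2
  have hrpW : ∀ y, y ∈ rp.support → y ∈ W := by
    intro y hy
    exact hrW y (SimpleGraph.Walk.support_toPath_subset r hy)
  have hrpcons : rp.support = w :: rp.support.tail := rp.support_eq_cons
  have happPath : (p.append rp).IsPath := by
    rw [SimpleGraph.Walk.isPath_def, SimpleGraph.Walk.support_append]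
    refine List.Nodup.append ((SimpleGraph.Walk.isPath_def p).mp hppath) ?_ ?_
    · have := (SimpleGraph.Walk.isPath_def rp).mp hrpPath
      rw [hrpcons] at this
      exact this.of_cons
    · intro y hy1 hy2
      have hyW : y ∈ W := hrpW y (by rw [hrpcons]; exact List.mem_cons_of_mem _ hy2)
      have hyw : y = w := by
        by_contra hcon
        exact hc1 y hy1 hcon hyW
      subst hyw
      have := (SimpleGraph.Walk.isPath_def rp).mp hrpPath
      rw [hrpcons] at this
      exact (List.nodup_cons.mp this).1 hy2
  obtain ⟨mw, hmw⟩ := hjunc u k j huk huj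
  have heq : (mw.toPath : T.Path k j).1 = p.append rp :=
    (huniq k j).unique (mw.toPath).2 happPath
  have hxapp : x ∈ (p.append rp).support := by
    rw [SimpleGraph.Walk.support_append]
    exact List.mem_append_left _ hx
  rw [← heq] at hxapp
  exact hmw x (SimpleGraph.Walk.support_toPath_subset mw hxapp)

/-- union of cliques of `W` -/
def UW (cl : ι → Set V) (W : Finset ι) : Set V := ⋃ i ∈ W, cl i

lemma tree_dist_ex (htree : T.IsTree) (W : Finset ι) (hWne : W.Nonempty) (k : ι) :
    ∃ d, ∃ w ∈ W, ∃ p : T.Walk k w, p.IsPath ∧ p.length = d := by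
  obtain ⟨w₀, hw₀⟩ := hWne
  obtain ⟨r⟩ := htree.isConnected k w₀
  exact ⟨((r.toPath : T.Path k w₀).1).length, w₀, hw₀, (r.toPath).1, (r.toPath).2, rfl⟩

lemma tree_avail (htree : T.IsTree)
    (hjunc : ∀ u i j, u ∈ cl i → u ∈ cl j → ∃ p : T.Walk i j, ∀ x ∈ p.support, u ∈ cl x)
    (W : Finset ι) (hWne : W.Nonempty)
    (hWconn : ∀ i ∈ W, ∀ j ∈ W, ∃ p : T.Walk i j, ∀ x ∈ p.support, x ∈ W)
    (k : ι) (hkW : k ∉ W) :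
    ∃ w ∈ W, cl k ∩ UW cl W ⊆ cl w := by
  classical
  have hex := tree_dist_ex htree W hWne k
  obtain ⟨w, hw, p, _, _, _, hcommon⟩ :=
    tree_core htree hjunc W hWconn k hkW (Nat.find hex) (Nat.find_spec hex)
      (fun d' hd' => Nat.find_min hex hd')
  refine ⟨w, hw, ?_⟩
  rintro u ⟨huk, huU⟩
  rw [UW, Set.mem_iUnion₂] at huU
  obtain ⟨j, hj, huj⟩ := huU
  exact hcommon j hj w p.end_mem_support u huk huj

lemma tree_greedy (htree : T.IsTree)
    (hjunc : ∀ u i j, u ∈ cl i → u ∈ cl j → ∃ p : T.Walk i j, ∀ x ∈ p.support, u ∈ cl x)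
    (W : Finset ι) (hWne : W.Nonempty)
    (hWconn : ∀ i ∈ W, ∀ j ∈ W, ∃ p : T.Walk i j, ∀ x ∈ p.support, x ∈ W)
    (hWproper : Wᶜ.Nonempty) :
    ∃ k, k ∉ W ∧ (∃ w ∈ W, T.Adj k w) ∧
      (∀ k', k' ∉ W → (cl k' ∩ UW cl W).ncard ≤ (cl k ∩ UW cl W).ncard) := by
  classical
  set F : ι → ℕ := fun k => (cl k ∩ UW cl W).ncard with hF
  obtain ⟨k₀, hk₀, hk₀max⟩ := Finset.exists_max_image Wᶜ F hWproper
  set M : Finset ι := Wᶜ.filter (fun k => F k = F k₀) with hM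
  have hMne : M.Nonempty := ⟨k₀, by rw [hM, Finset.mem_filter]; exact ⟨hk₀, rfl⟩⟩
  set dd : ι → ℕ := fun k => Nat.find (tree_dist_ex htree W hWne k) with hdd
  obtain ⟨k, hkM, hkmin⟩ := Finset.exists_min_image M dd hMne
  rw [hM, Finset.mem_filter] at hkM
  obtain ⟨hkWc, hkF⟩ := hkM
  have hkW : k ∉ W := Finset.mem_compl.mp hkWc
  have hmaxk : ∀ k', k' ∉ W → F k' ≤ F k := by
    intro k' hk'
    rw [hkF]
    exact hk₀max k' (Finset.mem_compl.mpr hk')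
  obtain ⟨w, hw, p, hppath, hplen, hponly, hcommon⟩ :=
    tree_core htree hjunc W hWconn k hkW (dd k) (Nat.find_spec (tree_dist_ex htree W hWne k))
      (fun d' hd' => Nat.find_min (tree_dist_ex htree W hWne k) hd')
  have hd1 : 1 ≤ dd k := by
    by_contra hcon
    have h0 : p.length = 0 := by omega
    exact hkW ((SimpleGraph.Walk.eq_of_length_eq_zero h0) ▸ hw)
  refine ⟨k, hkW, ?_, hmaxk⟩
  cases p with
  | nil => rw [SimpleGraph.Walk.length_nil] at hplen; omega
  | @cons _ x₁ _ h q =>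
    by_cases hq0 : q.length = 0
    · have hx₁w : x₁ = w := SimpleGraph.Walk.eq_of_length_eq_zero hq0
      exact ⟨w, hw, hx₁w ▸ h⟩
    · exfalso
      -- x₁ is also a maximizer, strictly closer to W
      have hx₁supp : x₁ ∈ (SimpleGraph.Walk.cons h q).support := by
        rw [SimpleGraph.Walk.support_cons]
        exact List.mem_cons_of_mem _ q.start_mem_support
      have hlen2 : q.length + 1 = dd k := by
        rw [← hplen, SimpleGraph.Walk.length_cons]
      have hx₁w : x₁ ≠ w := by
        intro hcon
        subst hcon
        have hone : dd k ≤ 1 := by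
          refine Nat.find_min' (tree_dist_ex htree W hWne k) ?_
          refine ⟨x₁, hw, SimpleGraph.Walk.cons h SimpleGraph.Walk.nil, ?_, ?_⟩
          · rw [SimpleGraph.Walk.cons_isPath_iff]
            refine ⟨SimpleGraph.Walk.IsPath.nil, ?_⟩
            rw [SimpleGraph.Walk.support_nil, List.mem_singleton]
            exact h.ne
          · simp
        omega
      have hx₁W : x₁ ∉ W := hponly x₁ hx₁supp hx₁w
      have hsub : cl k ∩ UW cl W ⊆ cl x₁ ∩ UW cl W := by
        rintro u ⟨huk, huU⟩
        have huU' := huU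
        rw [UW, Set.mem_iUnion₂] at huU'
        obtain ⟨j, hj, huj⟩ := huU'
        exact ⟨hcommon j hj x₁ hx₁supp u huk huj, huU⟩
      have hFle : F k ≤ F x₁ := Set.ncard_le_ncard hsub (Set.toFinite _)
      have hx₁M : x₁ ∈ M := by
        rw [hM, Finset.mem_filter]
        refine ⟨Finset.mem_compl.mpr hx₁W, ?_⟩
        have h1 : F x₁ ≤ F k₀ := hk₀max x₁ (Finset.mem_compl.mpr hx₁W)
        omega
      have hd2 : dd x₁ ≤ q.length :=
        Nat.find_min' (tree_dist_ex htree W hWne x₁) ⟨w, hw, q, hppath.of_cons, rfl⟩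
      have := hkmin x₁ hx₁M
      omega

end Greedy


section Main

variable [Fintype V]

theorem main_pluperfect (hG : Chordal G) (C₀ : Set V) (hC₀ : MaxClique G C₀) :
    ∃ (J : ℕ) (hJ : 0 < J) (f : Fin J → Set V),
      PluperfectOrdering G f ∧ f ⟨0, hJ⟩ = C₀ := by
  classical
  obtain ⟨ι, instF, instN, cl, T, hinj, hmaxA, hsurjA, htree, hjunc⟩ :=
    exists_cliquetree hG Finset.univ.card Finset.univ le_rfl
  haveI := instF; haveI := instN
  have hcoe : (↑(Finset.univ : Finset V) : Set V) = Set.univ := Finset.coe_univ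
  have hmax : ∀ i, MaxClique G (cl i) := fun i => maxCliqueIn_univ_iff.mp (hcoe ▸ hmaxA i)
  have hsurj : ∀ C, MaxClique G C → ∃ i, cl i = C := fun C hC =>
    hsurjA C (by rw [hcoe]; exact maxCliqueIn_univ_iff.mpr hC)
  obtain ⟨c₀, hc₀⟩ := hsurj C₀ hC₀
  set J := Fintype.card ι with hJdef
  have hcardι : Fintype.card ι = J := hJdef.symm
  have hJ : 0 < J := Fintype.card_pos
  set Good : Finset ι → Prop := fun W => W.Nonempty ∧
    (∀ i ∈ W, ∀ j ∈ W, ∃ p : T.Walk i j, ∀ x ∈ p.support, x ∈ W) ∧ Wᶜ.Nonempty with hGood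
  have hnxt_ex : ∀ W : Finset ι, ∃ k : ι, Good W →
      (k ∉ W ∧ (∃ w ∈ W, T.Adj k w) ∧
        ∀ k', k' ∉ W → (cl k' ∩ UW cl W).ncard ≤ (cl k ∩ UW cl W).ncard) := by
    intro W
    by_cases h : Good W
    · obtain ⟨k, hk⟩ := tree_greedy htree hjunc W h.1 h.2.1 h.2.2
      exact ⟨k, fun _ => hk⟩
    · exact ⟨c₀, fun hg => absurd hg h⟩
  choose nxt hnxtspec using hnxt_ex
  set Wseq : ℕ → Finset ι := fun n => Nat.rec ({c₀} : Finset ι) (fun _ W => insert (nxt W) W) n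
    with hWseqdef
  have hW0 : Wseq 0 = {c₀} := rfl
  have hWs : ∀ n, Wseq (n+1) = insert (nxt (Wseq n)) (Wseq n) := fun n => rfl
  set sfun : ℕ → ι := fun n => Nat.rec c₀ (fun m _ => nxt (Wseq m)) n with hsfundef
  have hs0 : sfun 0 = c₀ := rfl
  have hss : ∀ n, sfun (n+1) = nxt (Wseq n) := fun n => rfl
  have hWmono : ∀ m n, m ≤ n → Wseq m ⊆ Wseq n := by
    intro m n hmn
    induction n with
    | zero =>
      have hm0 : m = 0 := by omega
      subst hm0; exact subset_rfl
    | succ n ih =>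
      rcases Nat.lt_or_ge m (n+1) with h | h
      · refine (ih (by omega)).trans ?_
        rw [hWs]
        exact Finset.subset_insert _ _
      · have hm : m = n + 1 := by omega
        subst hm; exact subset_rfl
  have hsmem : ∀ n, sfun n ∈ Wseq n := by
    intro n
    cases n with
    | zero => rw [hs0, hW0]; exact Finset.mem_singleton_self c₀
    | succ n => rw [hss, hWs]; exact Finset.mem_insert_self _ _
  have hInv : ∀ n, n < J → ((Wseq n).card = n + 1 ∧
      (∀ i ∈ Wseq n, ∀ j ∈ Wseq n, ∃ p : T.Walk i j, ∀ x ∈ p.support, x ∈ Wseq n) ∧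
      Wseq n = (Finset.range (n+1)).image sfun) := by
    intro n
    induction n with
    | zero =>
      intro _
      refine ⟨by rw [hW0]; exact Finset.card_singleton c₀, ?_, ?_⟩
      · rw [hW0]
        intro i hi j hj
        rw [Finset.mem_singleton] at hi hj
        subst hi; subst hj
        refine ⟨SimpleGraph.Walk.nil, ?_⟩
        intro x hx
        rw [SimpleGraph.Walk.support_nil, List.mem_singleton] at hx
        subst hx
        exact Finset.mem_singleton_self _
      · rw [hW0, Finset.range_one, Finset.image_singleton, hs0]
    | succ n ih =>
      intro hn
      obtain ⟨hcard, hconn, himg⟩ := ih (by omega)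
      have hGoodn : Good (Wseq n) := by
        refine ⟨Finset.card_pos.mp (by omega), hconn, ?_⟩
        rw [← Finset.card_pos, Finset.card_compl, hcard]
        omega
      obtain ⟨hnew, ⟨w, hwW, hadj⟩, hmaxsep⟩ := hnxtspec (Wseq n) hGoodn
      refine ⟨?_, ?_, ?_⟩
      · rw [hWs, Finset.card_insert_of_notMem hnew, hcard]
      · rw [hWs]
        intro i hi j hj
        have hwalknew : ∀ j' ∈ Wseq n, ∃ p : T.Walk (nxt (Wseq n)) j',
            ∀ x ∈ p.support, x ∈ insert (nxt (Wseq n)) (Wseq n) := by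
          intro j' hj'
          obtain ⟨r, hr⟩ := hconn w hwW j' hj'
          refine ⟨SimpleGraph.Walk.cons hadj r, ?_⟩
          intro x hx
          rw [SimpleGraph.Walk.support_cons, List.mem_cons] at hx
          rcases hx with rfl | hx
          · exact Finset.mem_insert_self _ _
          · exact Finset.mem_insert_of_mem (hr x hx)
        rw [Finset.mem_insert] at hi hj
        rcases hi with rfl | hi
        · rcases hj with rfl | hj
          · refine ⟨SimpleGraph.Walk.nil, ?_⟩
            intro x hx
            rw [SimpleGraph.Walk.support_nil, List.mem_singleton] at hx
            subst hx
            exact Finset.mem_insert_self _ _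
          · exact hwalknew j hj
        · rcases hj with rfl | hj
          · obtain ⟨p, hp⟩ := hwalknew i hi
            refine ⟨p.reverse, ?_⟩
            intro x hx
            rw [SimpleGraph.Walk.support_reverse, List.mem_reverse] at hx
            exact hp x hx
          · obtain ⟨p, hp⟩ := hconn i hi j hj
            exact ⟨p, fun x hx => Finset.mem_insert_of_mem (hp x hx)⟩
      · rw [hWs, Finset.range_add_one, Finset.image_insert, hss n, ← himg]
  have hGoodAt : ∀ m, m + 1 < J → Good (Wseq m) := by
    intro m hm
    obtain ⟨hcard, hconn, _⟩ := hInv m (by omega)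
    refine ⟨Finset.card_pos.mp (by omega), hconn, ?_⟩
    rw [← Finset.card_pos, Finset.card_compl, hcard]
    omega
  have hsnotmem : ∀ n, n + 1 < J → sfun (n+1) ∉ Wseq n := by
    intro n hn
    rw [hss]
    exact (hnxtspec _ (hGoodAt n hn)).1
  have hkey : ∀ a b : ℕ, a < b → b < J → sfun a ≠ sfun b := by
    intro a b hab hbJ hEq
    have hb : b - 1 + 1 = b := by omega
    have hnm : sfun b ∉ Wseq (b - 1) := by
      have := hsnotmem (b - 1) (by omega)
      rwa [hb] at this
    have hmem : sfun a ∈ Wseq (b - 1) := hWmono a (b - 1) (by omega) (hsmem a)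
    rw [hEq] at hmem
    exact hnm hmem
  have hfinj : Function.Injective (fun j : Fin J => sfun j.val) := by
    intro a b h
    simp only at h
    by_contra hne
    have hvalne : a.val ≠ b.val := fun hc => hne (Fin.ext hc)
    rcases Nat.lt_or_ge a.val b.val with h1 | h1
    · exact hkey a.val b.val h1 b.isLt h
    · exact hkey b.val a.val (by omega) a.isLt h.symm
  have hfsurj : Function.Surjective (fun j : Fin J => sfun j.val) := by
    have := (Fintype.bijective_iff_injective_and_card (fun j : Fin J => sfun j.val)).mpr
      ⟨hfinj, by rw [Fintype.card_fin, hJdef]⟩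
    exact this.2
  refine ⟨J, hJ, fun j => cl (sfun j.val), ⟨?_, ?_, ?_, ?_⟩, ?_⟩
  · intro a b h
    simp only at h
    exact hfinj (hinj h)
  · intro i
    exact hmax _
  · intro C hC
    obtain ⟨i, hi⟩ := hsurj C hC
    obtain ⟨j, hj⟩ := hfsurj i
    refine ⟨j, ?_⟩
    simp only at hj ⊢
    rw [hj, hi]
  · intro j hjne
    have hjpos : 0 < j.val := Nat.pos_of_ne_zero hjne
    have hjJ : j.val < J := j.isLt
    set n := j.val - 1 with hn
    have hnJ : n + 1 < J := by omega
    have hGoodn := hGoodAt n hnJ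
    have hspec := hnxtspec (Wseq n) hGoodn
    have hjval : j.val = n + 1 := by omega
    have hfj : cl (sfun j.val) = cl (nxt (Wseq n)) := by rw [hjval, hss]
    have himg := (hInv n (by omega)).2.2
    have hpu : priorUnion (fun j : Fin J => cl (sfun j.val)) j = UW cl (Wseq n) := by
      ext x
      simp only [priorUnion, UW, Set.mem_iUnion, Set.mem_setOf_eq, exists_prop]
      constructor
      · rintro ⟨i, hij, hx⟩
        refine ⟨sfun i.val, ?_, hx⟩
        rw [himg]
        refine Finset.mem_image.mpr ⟨i.val, ?_, rfl⟩
        rw [Finset.mem_range]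
        have hij' : i.val < j.val := hij
        omega
      · rintro ⟨w, hw, hx⟩
        rw [himg, Finset.mem_image] at hw
        obtain ⟨m, hm, rfl⟩ := hw
        rw [Finset.mem_range] at hm
        have hmJ : m < J := by omega
        refine ⟨⟨m, hmJ⟩, ?_, hx⟩
        rw [Fin.lt_def]
        exact (by omega : m < j.val)
    constructor
    · obtain ⟨w, hwW, hsub⟩ :=
        tree_avail htree hjunc (Wseq n) hGoodn.1 hGoodn.2.1 (nxt (Wseq n)) hspec.1
      rw [himg, Finset.mem_image] at hwW
      obtain ⟨m, hm, rfl⟩ := hwW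
      rw [Finset.mem_range] at hm
      have hmJ : m < J := by omega
      refine ⟨⟨m, hmJ⟩, ?_, ?_⟩
      · rw [Fin.lt_def]
        exact (by omega : m < j.val)
      · rw [hpu]
        simp only
        rw [hfj]
        exact hsub
    · intro k hjk havail hssub
      rw [Fin.le_def] at hjk
      have hkW : sfun k.val ∉ Wseq n := by
        rcases Nat.lt_or_ge j.val k.val with h1 | h1
        · have h2 := hsnotmem (k.val - 1) (by omega)
          rw [show k.val - 1 + 1 = k.val by omega] at h2
          intro hmem
          exact h2 (hWmono n (k.val - 1) (by omega) hmem)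
        · have hkj : k.val = j.val := by omega
          rw [hkj, hjval, hss]
          exact hspec.1
      have hle := hspec.2.2 (sfun k.val) hkW
      rw [hpu] at hssub
      simp only at hssub
      rw [hfj] at hssub
      have hlt : (cl (nxt (Wseq n)) ∩ UW cl (Wseq n)).ncard <
          (cl (sfun k.val) ∩ UW cl (Wseq n)).ncard :=
        Set.ncard_lt_ncard hssub (Set.toFinite _)
      omega
  · simp only
    rw [hs0, hc₀]

end Main

end ChordalAux

/-- every decomposable graph admits a pluperfect ordering of its
cliques, and any clique can be chosen first. -/
theorem exists_pluperfect_ordering {V : Type*} [Fintype V] (G : SimpleGraph V)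
    (hG : Chordal G) (C₀ : Set V) (hC₀ : MaxClique G C₀) :
    ∃ (J : ℕ) (hJ : 0 < J) (f : Fin J → Set V),
      PluperfectOrdering G f ∧ f ⟨0, hJ⟩ = C₀ := by
  exact ChordalAux.main_pluperfect hG C₀ hC₀
end

section
/- Suppose π is the density of a weakly structurally Markov graph law on decomposable graphs on V with full support. Then for any decomposable graph G with pluperfect clique ordering C_1,…,C_J, junction tree links (C_j, C_{h(j)}) with separators S_j, and any choice of sets R_j ⊆ C_{h(j)} with R_j ⊋ S_j, one has π(G) = ∏_j π(G⟨C_j⟩) · ∏_{j≥2} π(G⟨R_j, C_j⟩) / (π(G⟨R_j⟩) π(G⟨C_j⟩)), where G⟨A_1,…,A_k⟩ denotes the graph on V complete on each A_i and with no other edges. -/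
open scoped Classical BigOperators

section WSMAux

open SimpleGraph

variable {V : Type*}

lemma coverGraph_isClique {𝒜 : Set (Set V)} {M : Set V} (hM : M ∈ 𝒜) :
    (coverGraph 𝒜).IsClique M := fun x hx y hy hne => ⟨hne, M, hM, hx, hy⟩

lemma zmod_shift_ne {n : ℕ} (hn : 4 ≤ n) (a : ZMod n) {k : ℕ} (hk1 : 1 ≤ k) (hk : k ≤ 3) :
    a + (k : ZMod n) ≠ a := by
  haveI : NeZero n := ⟨by omega⟩
  intro hEq
  have h0 : ((k : ℕ) : ZMod n) = 0 := add_left_cancel (by rw [hEq, add_zero])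
  rw [ZMod.natCast_eq_zero_iff] at h0
  exact absurd (Nat.le_of_dvd (by omega) h0) (by omega)

lemma cycle_far_pair {n : ℕ} {H : SimpleGraph V} (hn : 4 ≤ n) (e : ZMod n ↪ V)
    (hadj : ∀ i j : ZMod n, H.Adj (e i) (e j) ↔ (i = j + 1 ∨ j = i + 1))
    {A : Set V} (hA : H.IsClique A) (a : ZMod n) (ha : e a ∈ A) (ha2 : e (a + 2) ∈ A) :
    False := by
  have h2 : ((2 : ℕ) : ZMod n) = (2 : ZMod n) := by push_cast; ring
  have h3 : ((3 : ℕ) : ZMod n) = (3 : ZMod n) := by push_cast; ring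
  have h1' : ((1 : ℕ) : ZMod n) = (1 : ZMod n) := by push_cast; ring
  have hne2 : a + (2 : ZMod n) ≠ a := by
    have := zmod_shift_ne (k := 2) hn a (by norm_num) (by norm_num); rwa [h2] at this
  have hne : e a ≠ e (a + 2) := fun hEq => hne2 (e.injective hEq.symm)
  have hadj' : H.Adj (e a) (e (a + 2)) := hA ha ha2 hne
  rcases (hadj _ _).1 hadj' with h1 | h1
  · have hc : a + (3 : ZMod n) = a := by linear_combination -h1
    have := zmod_shift_ne (k := 3) hn a (by norm_num) (by norm_num)
    rw [h3] at this; exact this hc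
  · have hc : a + (1 : ZMod n) = a := by linear_combination h1
    have := zmod_shift_ne (k := 1) hn a (by norm_num) (by norm_num)
    rw [h1'] at this; exact this hc

lemma chordal_cover_subpair {𝒜 : Set (Set V)} {X Y : Set V} (hsub : 𝒜 ⊆ {X, Y}) :
    Chordal (coverGraph 𝒜) := by
  rintro ⟨n, e, hn, hadj⟩
  have hW : ∀ i : ZMod n, ∃ A ∈ 𝒜, e i ∈ A ∧ e (i + 1) ∈ A := by
    intro i
    exact ((hadj i (i + 1)).2 (Or.inr rfl)).2
  obtain ⟨A0, hA0, h00, h01⟩ := hW 0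
  obtain ⟨A1, hA1, h11, h12⟩ := hW 1
  obtain ⟨A2, hA2, h22, h23⟩ := hW 2
  rw [show (0 : ZMod n) + 1 = 1 by ring] at h01
  rw [show (1 : ZMod n) + 1 = 2 by ring] at h12
  rw [show (2 : ZMod n) + 1 = 3 by ring] at h23
  have htri : A0 = A1 ∨ A0 = A2 ∨ A1 = A2 := by
    rcases hsub hA0 with e0 | e0 <;> rcases hsub hA1 with e1 | e1 <;>
      rcases hsub hA2 with e2 | e2 <;> simp_all
  rcases htri with hEq | hEq | hEq
  · rw [hEq] at h00
    refine cycle_far_pair hn e hadj (coverGraph_isClique hA1) 0 h00 ?_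
    rw [show (0 : ZMod n) + 2 = 2 by ring]; exact h12
  · rw [← hEq] at h22
    refine cycle_far_pair hn e hadj (coverGraph_isClique hA0) 0 h00 ?_
    rw [show (0 : ZMod n) + 2 = 2 by ring]; exact h22
  · rw [← hEq] at h23
    refine cycle_far_pair hn e hadj (coverGraph_isClique hA1) 1 h11 ?_
    rw [show (1 : ZMod n) + 2 = 3 by ring]; exact h23

lemma induce_eq_of_forall {G₁ G₂ : SimpleGraph V} {A : Set V}
    (h : ∀ u v, u ∈ A → v ∈ A → (G₁.Adj u v ↔ G₂.Adj u v)) :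
    G₁.induce A = G₂.induce A := by
  ext ⟨u, hu⟩ ⟨v, hv⟩
  exact h u v hu hv

lemma induce_adj_of_eq {G₁ G₂ : SimpleGraph V} {A : Set V} (h : G₁.induce A = G₂.induce A)
    {u v : V} (hu : u ∈ A) (hv : v ∈ A) : G₁.Adj u v ↔ G₂.Adj u v :=
  iff_of_eq (congrArg (fun (H : SimpleGraph A) => H.Adj ⟨u, hu⟩ ⟨v, hv⟩) h)

lemma mass_singleton (π : SimpleGraph V → ℝ) (X : SimpleGraph V) :
    mass π {X} = π X := finsum_mem_singleton

lemma le_mass [Fintype V] (π : SimpleGraph V → ℝ) (hπ : ∀ G, 0 ≤ π G)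
    {S : Set (SimpleGraph V)} {X : SimpleGraph V} (hX : X ∈ S) : π X ≤ mass π S := by
  have hfin : S.Finite := S.toFinite
  show π X ≤ ∑ᶠ G ∈ S, π G
  rw [← hfin.coe_toFinset, finsum_mem_coe_finset]
  exact Finset.single_le_sum (fun g _ => hπ g) (hfin.mem_toFinset.2 hX)

lemma exists_maxClique_superset [Fintype V] (G : SimpleGraph V) {C : Set V}
    (hC : G.IsClique C) : ∃ M, MaxClique G M ∧ C ⊆ M := by
  obtain ⟨M, hM, hmax⟩ := Set.Finite.exists_maximalFor id {D : Set V | G.IsClique D ∧ C ⊆ D}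
    (Set.toFinite _) ⟨C, hC, subset_rfl⟩
  exact ⟨M, ⟨hM.1, fun D hD hMD => hMD.antisymm (hmax ⟨hD, hM.2.trans hMD⟩ hMD)⟩, hM.2⟩

def prefixUnion {J : ℕ} (f : Fin J → Set V) (m : ℕ) : Set V :=
  ⋃ i ∈ {i : Fin J | (i : ℕ) < m}, f i

def prefixCliques {J : ℕ} (f : Fin J → Set V) (m : ℕ) : Set (Set V) :=
  f '' {i : Fin J | (i : ℕ) < m}

lemma mem_prefixUnion {J : ℕ} {f : Fin J → Set V} {m : ℕ} {x : V} :
    x ∈ prefixUnion f m ↔ ∃ i : Fin J, (i : ℕ) < m ∧ x ∈ f i := by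
  simp [prefixUnion]

lemma priorUnion_eq {J : ℕ} (f : Fin J → Set V) (j : Fin J) :
    priorUnion f j = prefixUnion f (j : ℕ) := rfl

lemma clique_pair_mem_prefix {J : ℕ} {G : SimpleGraph V} {f : Fin J → Set V}
    (hf : PluperfectOrdering G f) (k : Fin J) (m : ℕ) (u v : V)
    (hu : u ∈ f k) (hv : v ∈ f k) (hum : u ∈ prefixUnion f m) (hvm : v ∈ prefixUnion f m) :
    ∃ i : Fin J, (i : ℕ) < m ∧ u ∈ f i ∧ v ∈ f i := by
  by_cases hkm : (k : ℕ) < m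
  · exact ⟨k, hkm, hu, hv⟩
  · push_neg at hkm
    have hm1 : 1 ≤ m := by
      obtain ⟨i, hi, -⟩ := mem_prefixUnion.1 hum; omega
    have hk0 : (k : ℕ) ≠ 0 := by omega
    obtain ⟨i, hik, hsub⟩ := (hf.2.2.2 k hk0).1
    have hmono : prefixUnion f m ⊆ priorUnion f k := by
      rw [priorUnion_eq]
      intro x hx
      obtain ⟨i', hi', hx'⟩ := mem_prefixUnion.1 hx
      exact mem_prefixUnion.2 ⟨i', by omega, hx'⟩
    have hu' : u ∈ f i := hsub ⟨hu, hmono hum⟩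
    have hv' : v ∈ f i := hsub ⟨hv, hmono hvm⟩
    exact clique_pair_mem_prefix hf i m u v hu' hv' hum hvm
termination_by (k : ℕ)
decreasing_by exact hik

lemma adj_exists_clique [Fintype V] {J : ℕ} {G : SimpleGraph V} {f : Fin J → Set V}
    (hf : PluperfectOrdering G f) {u v : V} (hadj : G.Adj u v) :
    ∃ k, u ∈ f k ∧ v ∈ f k := by
  obtain ⟨M, hMmax, hMsub⟩ := exists_maxClique_superset G
    (SimpleGraph.isClique_pair.2 fun _ => hadj)
  obtain ⟨k, rfl⟩ := hf.2.2.1 M hMmax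
  exact ⟨k, hMsub (by simp), hMsub (by simp)⟩

lemma adj_iff_prefix [Fintype V] {J : ℕ} {G : SimpleGraph V} {f : Fin J → Set V}
    (hf : PluperfectOrdering G f) {m : ℕ} {u v : V}
    (hum : u ∈ prefixUnion f m) (hvm : v ∈ prefixUnion f m) :
    G.Adj u v ↔ (coverGraph (prefixCliques f m)).Adj u v := by
  constructor
  · intro hadj
    obtain ⟨k, hu, hv⟩ := adj_exists_clique hf hadj
    obtain ⟨i, him, hu', hv'⟩ := clique_pair_mem_prefix hf k m u v hu hv hum hvm
    exact ⟨hadj.ne, f i, ⟨i, him, rfl⟩, hu', hv'⟩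
  · rintro ⟨hne, M, ⟨i, him, rfl⟩, hu, hv⟩
    exact (hf.2.1 i).1 hu hv hne

lemma chordal_prefix [Fintype V] {J : ℕ} {G : SimpleGraph V} {f : Fin J → Set V}
    (hG : Chordal G) (hf : PluperfectOrdering G f) (m : ℕ) :
    Chordal (coverGraph (prefixCliques f m)) := by
  rintro ⟨n, e, hn, hadj⟩
  have hmem : ∀ i : ZMod n, e i ∈ prefixUnion f m := by
    intro i
    obtain ⟨hne, M, ⟨i', hi', rfl⟩, hu, -⟩ := (hadj i (i + 1)).2 (Or.inr rfl)
    exact mem_prefixUnion.2 ⟨i', hi', hu⟩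
  exact hG ⟨n, e, hn, fun a b => (adj_iff_prefix hf (hmem a) (hmem b)).trans (hadj a b)⟩

lemma cover_sep {𝒜 : Set (Set V)} {A B : Set V}
    (hsubs : ∀ M ∈ 𝒜, M ⊆ A ∨ M ⊆ B) :
    ∀ u ∈ A \ B, ∀ v ∈ B \ A, ∀ p : (coverGraph 𝒜).Walk u v, ∃ w ∈ A ∩ B, w ∈ p.support := by
  have key : ∀ (u v : V) (p : (coverGraph 𝒜).Walk u v), u ∈ A \ B → v ∈ B \ A →
      ∃ w ∈ A ∩ B, w ∈ p.support := by
    intro u v p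
    induction p with
    | nil => intro hu hv; exact absurd hv.1 hu.2
    | @cons u w v hadj q ih =>
      intro hu hv
      obtain ⟨hne, M, hM, huM, hwM⟩ := hadj
      have hwA : w ∈ A := by
        rcases hsubs M hM with hMA | hMB
        · exact hMA hwM
        · exact absurd (hMB huM) hu.2
      by_cases hwB : w ∈ B
      · exact ⟨w, ⟨hwA, hwB⟩, by
          show _ ∈ u :: q.support
          exact List.mem_cons_of_mem _ q.start_mem_support⟩
      · obtain ⟨x, hx, hxs⟩ := ih ⟨hwA, hwB⟩ hv
        exact ⟨x, hx, by
          show _ ∈ u :: q.support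
          exact List.mem_cons_of_mem _ hxs⟩
  exact fun u hu v hv p => key u v p hu hv

lemma crossFree {A B : Set V} {G : SimpleGraph V} (hG : G ∈ Ustar A B)
    {u v : V} (hu : u ∈ A \ B) (hv : v ∈ B \ A) : ¬ G.Adj u v := by
  intro hadj
  obtain ⟨w, hw, hws⟩ := hG.2.1.2.2 u hu v hv (SimpleGraph.Walk.cons hadj SimpleGraph.Walk.nil)
  simp only [SimpleGraph.Walk.support_cons, SimpleGraph.Walk.support_nil, List.mem_cons,
    List.mem_singleton, List.not_mem_nil, or_false] at hws
  rcases hws with rfl | rfl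
  · exact hu.2 hw.2
  · exact hv.2 hw.1

lemma adj_transfer {A B : Set V} {G₁ G₂ : SimpleGraph V} (h₁ : G₁ ∈ Ustar A B)
    (hA : G₁.induce A = G₂.induce A) (hB : G₁.induce B = G₂.induce B)
    {u v : V} (hadj : G₁.Adj u v) : G₂.Adj u v := by
  have hcov := h₁.2.1.1
  have hu : u ∈ A ∪ B := by rw [hcov]; trivial
  have hv : v ∈ A ∪ B := by rw [hcov]; trivial
  by_cases huA : u ∈ A <;> by_cases hvA : v ∈ A
  · exact (induce_adj_of_eq hA huA hvA).1 hadj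
  · have hvB : v ∈ B := hv.resolve_left hvA
    by_cases huB : u ∈ B
    · exact (induce_adj_of_eq hB huB hvB).1 hadj
    · exact absurd hadj (crossFree h₁ ⟨huA, huB⟩ ⟨hvB, hvA⟩)
  · have huB : u ∈ B := hu.resolve_left huA
    by_cases hvB : v ∈ B
    · exact (induce_adj_of_eq hB huB hvB).1 hadj
    · exact absurd hadj.symm (crossFree h₁ ⟨hvA, hvB⟩ ⟨huB, huA⟩)
  · have huB : u ∈ B := hu.resolve_left huA
    have hvB : v ∈ B := hv.resolve_left hvA
    exact (induce_adj_of_eq hB huB hvB).1 hadj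

lemma ustar_unique {A B : Set V} {G₁ G₂ : SimpleGraph V} (h₁ : G₁ ∈ Ustar A B)
    (h₂ : G₂ ∈ Ustar A B) (hA : G₁.induce A = G₂.induce A) (hB : G₁.induce B = G₂.induce B) :
    G₁ = G₂ := by
  ext u v
  exact ⟨adj_transfer h₁ hA hB, adj_transfer h₂ hA.symm hB.symm⟩

lemma mem_ustar_of {𝒜 : Set (Set V)} {U R C : Set V}
    (hchord : Chordal (coverGraph 𝒜))
    (hRU : R ⊆ U) (hCU : C ∩ U ⊆ R) (hRC : ¬ R ⊆ C)
    (hRcl : ∃ M ∈ 𝒜, R ⊆ M)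
    (hcases : ∀ M ∈ 𝒜, M ⊆ U ∨ M = R ∨ M = C) :
    coverGraph 𝒜 ∈ Ustar ((Set.univ \ U) ∪ R) U := by
  have hAB : ((Set.univ \ U) ∪ R) ∩ U = R := by
    ext x
    constructor
    · rintro ⟨hxA | hxR, hxU⟩
      · exact absurd hxU hxA.2
      · exact hxR
    · intro hxR; exact ⟨Or.inr hxR, hRU hxR⟩
  have hCA : C ⊆ (Set.univ \ U) ∪ R := by
    intro x hx
    by_cases hxU : x ∈ U
    · exact Or.inr (hCU ⟨hx, hxU⟩)
    · exact Or.inl ⟨trivial, hxU⟩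
  obtain ⟨M₀, hM₀, hRM₀⟩ := hRcl
  have hRclq : (coverGraph 𝒜).IsClique R := (coverGraph_isClique hM₀).subset hRM₀
  refine ⟨hchord, ⟨?_, ?_, ?_⟩, ?_, ?_, ?_⟩
  · apply Set.eq_univ_of_forall
    intro x
    by_cases hxU : x ∈ U
    · exact Or.inr hxU
    · exact Or.inl (Or.inl ⟨trivial, hxU⟩)
  · rw [hAB]; exact hRclq
  · apply cover_sep
    intro M hM
    rcases hcases M hM with hMU | rfl | rfl
    · exact Or.inr hMU
    · exact Or.inr hRU
    · exact Or.inl hCA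
  · rw [hAB]; exact Set.subset_union_right
  · rw [hAB]; exact hRclq
  · rw [hAB]
    intro D hDA hD hRD
    by_contra hne
    obtain ⟨v, hvD, hvR⟩ := Set.exists_of_ssubset (Set.ssubset_iff_subset_ne.2 ⟨hRD, hne⟩)
    obtain ⟨r, hrR, hrC⟩ : ∃ r ∈ R, r ∉ C := by
      by_contra hall; push_neg at hall; exact hRC hall
    have hvr : v ≠ r := fun hEq => hvR (hEq ▸ hrR)
    obtain ⟨-, M, hM, hvM, hrM⟩ := hD hvD (hRD hrR) hvr
    rcases hcases M hM with hMU | rfl | rfl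
    · have hmem : v ∈ ((Set.univ \ U) ∪ R) ∩ U := ⟨hDA hvD, hMU hvM⟩
      rw [hAB] at hmem
      exact hvR hmem
    · exact hvR hvM
    · exact hrC hrM

lemma wsm_crossover [Fintype V] (π : SimpleGraph V → ℝ)
    (hlaw : IsGraphLaw π) (hsupp : FullSupport π) (hwsm : WeaklyStructurallyMarkov π)
    {G : SimpleGraph V} (hG : Chordal G) {J : ℕ} {f : Fin J → Set V}
    (hf : PluperfectOrdering G f) {h : Fin J → Fin J}
    (hh : ∀ j : Fin J, (j : ℕ) ≠ 0 → h j < j)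
    (hsep : ∀ j : Fin J, (j : ℕ) ≠ 0 → f j ∩ f (h j) = f j ∩ priorUnion f j)
    {R : Fin J → Set V} (hR : ∀ j : Fin J, (j : ℕ) ≠ 0 → R j ⊆ f (h j) ∧ f j ∩ f (h j) ⊂ R j)
    (j : Fin J) (hj0 : (j : ℕ) ≠ 0) :
    π (coverGraph (prefixCliques f ((j : ℕ) + 1))) * π (coverGraph {R j}) =
      π (coverGraph (prefixCliques f (j : ℕ))) * π (coverGraph {R j, f j}) := by
  obtain ⟨hRf, hSR⟩ := hR j hj0
  have hhj : (h j : ℕ) < (j : ℕ) := hh j hj0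
  set U : Set V := prefixUnion f (j : ℕ) with hU
  set A : Set V := (Set.univ \ U) ∪ R j with hA
  have hfhU : f (h j) ⊆ U := fun x hx => mem_prefixUnion.2 ⟨h j, hhj, hx⟩
  have hRU : R j ⊆ U := hRf.trans hfhU
  have hCU : f j ∩ U ⊆ R j := by
    intro x hx
    have hx' : x ∈ f j ∩ f (h j) := by
      rw [hsep j hj0, priorUnion_eq]; exact hx
    exact hSR.subset hx'
  have hRC : ¬ R j ⊆ f j := by
    intro hsub
    exact hSR.not_subset fun x hx => ⟨hsub hx, hRf hx⟩
  have memP : ∀ i : Fin J, (i : ℕ) < (j : ℕ) + 1 → f i ∈ prefixCliques f ((j : ℕ) + 1) :=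
    fun i hi => ⟨i, hi, rfl⟩
  have memP' : ∀ i : Fin J, (i : ℕ) < (j : ℕ) → f i ∈ prefixCliques f (j : ℕ) :=
    fun i hi => ⟨i, hi, rfl⟩
  set P := coverGraph (prefixCliques f ((j : ℕ) + 1)) with hPdef
  set P' := coverGraph (prefixCliques f (j : ℕ)) with hP'def
  set Q := coverGraph ({R j} : Set (Set V)) with hQdef
  set Q' := coverGraph ({R j, f j} : Set (Set V)) with hQ'def
  have hQchord : Chordal Q := chordal_cover_subpair (X := R j) (Y := f j) (by simp)
  have hQ'chord : Chordal Q' := chordal_cover_subpair (X := R j) (Y := f j) subset_rfl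
  have hcasesP : ∀ M ∈ prefixCliques f ((j : ℕ) + 1), M ⊆ U ∨ M = R j ∨ M = f j := by
    rintro M ⟨i, him, rfl⟩
    have him' : (i : ℕ) < (j : ℕ) + 1 := him
    by_cases hij : (i : ℕ) < (j : ℕ)
    · exact Or.inl (fun x hx => mem_prefixUnion.2 ⟨i, hij, hx⟩)
    · have : i = j := Fin.ext (by omega)
      subst this
      exact Or.inr (Or.inr rfl)
  have hcasesP' : ∀ M ∈ prefixCliques f (j : ℕ), M ⊆ U ∨ M = R j ∨ M = f j := by
    rintro M ⟨i, him, rfl⟩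
    have him' : (i : ℕ) < (j : ℕ) := him
    exact Or.inl (fun x hx => mem_prefixUnion.2 ⟨i, him', hx⟩)
  have hP : P ∈ Ustar A U :=
    mem_ustar_of (chordal_prefix hG hf _) hRU hCU hRC
      ⟨f (h j), memP (h j) (by omega), hRf⟩ hcasesP
  have hP' : P' ∈ Ustar A U :=
    mem_ustar_of (chordal_prefix hG hf _) hRU hCU hRC
      ⟨f (h j), memP' (h j) (by omega), hRf⟩ hcasesP'
  have hQ : Q ∈ Ustar A U :=
    mem_ustar_of hQchord hRU hCU hRC ⟨R j, rfl, subset_rfl⟩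
      (fun M hM => Or.inr (Or.inl hM))
  have hQ' : Q' ∈ Ustar A U :=
    mem_ustar_of hQ'chord hRU hCU hRC ⟨R j, Set.mem_insert _ _, subset_rfl⟩
      (by rintro M (rfl | rfl)
          · exact Or.inr (Or.inl rfl)
          · exact Or.inr (Or.inr rfl))
  have hAU : ∀ x, x ∈ A → x ∈ U → x ∈ R j := by
    rintro x (hx | hx) hxU
    · exact absurd hxU hx.2
    · exact hx
  have hPQ'A : P.induce A = Q'.induce A := by
    apply induce_eq_of_forall
    intro u v hu hv
    constructor
    · rintro ⟨hne, M, ⟨i, him, rfl⟩, huM, hvM⟩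
      have him' : (i : ℕ) < (j : ℕ) + 1 := him
      by_cases hij : (i : ℕ) < (j : ℕ)
      · have huR : u ∈ R j := hAU u hu (mem_prefixUnion.2 ⟨i, hij, huM⟩)
        have hvR : v ∈ R j := hAU v hv (mem_prefixUnion.2 ⟨i, hij, hvM⟩)
        exact ⟨hne, R j, Set.mem_insert _ _, huR, hvR⟩
      · have : i = j := Fin.ext (by omega)
        subst this
        exact ⟨hne, f i, Set.mem_insert_of_mem _ rfl, huM, hvM⟩
    · rintro ⟨hne, M, (rfl | rfl), huM, hvM⟩
      · exact ⟨hne, f (h j), memP (h j) (by omega), hRf huM, hRf hvM⟩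
      · exact ⟨hne, f j, memP j (by omega), huM, hvM⟩
  have hPP'B : P.induce U = P'.induce U := by
    apply induce_eq_of_forall
    intro u v hu hv
    constructor
    · rintro ⟨hne, M, ⟨i, him, rfl⟩, huM, hvM⟩
      have him' : (i : ℕ) < (j : ℕ) + 1 := him
      by_cases hij : (i : ℕ) < (j : ℕ)
      · exact ⟨hne, f i, memP' i hij, huM, hvM⟩
      · have : i = j := Fin.ext (by omega)
        subst this
        exact ⟨hne, f (h i), memP' (h i) hhj, hRf (hCU ⟨huM, hu⟩), hRf (hCU ⟨hvM, hv⟩)⟩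
    · rintro ⟨hne, M, ⟨i, him, rfl⟩, huM, hvM⟩
      have him' : (i : ℕ) < (j : ℕ) := him
      exact ⟨hne, f i, memP i (by omega), huM, hvM⟩
  have hQP'A : Q.induce A = P'.induce A := by
    apply induce_eq_of_forall
    intro u v hu hv
    constructor
    · rintro ⟨hne, M, rfl, huM, hvM⟩
      exact ⟨hne, f (h j), memP' (h j) hhj, hRf huM, hRf hvM⟩
    · rintro ⟨hne, M, ⟨i, him, rfl⟩, huM, hvM⟩
      have him' : (i : ℕ) < (j : ℕ) := him
      exact ⟨hne, R j, rfl, hAU u hu (mem_prefixUnion.2 ⟨i, him', huM⟩),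
        hAU v hv (mem_prefixUnion.2 ⟨i, him', hvM⟩)⟩
  have hQQ'B : Q.induce U = Q'.induce U := by
    apply induce_eq_of_forall
    intro u v hu hv
    constructor
    · rintro ⟨hne, M, rfl, huM, hvM⟩
      exact ⟨hne, R j, Set.mem_insert _ _, huM, hvM⟩
    · rintro ⟨hne, M, (rfl | rfl), huM, hvM⟩
      · exact ⟨hne, R j, rfl, huM, hvM⟩
      · exact ⟨hne, R j, rfl, hCU ⟨huM, hu⟩, hCU ⟨hvM, hv⟩⟩
  have hABuniv : A ∪ U = Set.univ := by
    apply Set.eq_univ_of_forall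
    intro x
    by_cases hxU : x ∈ U
    · exact Or.inr hxU
    · exact Or.inl (Or.inl ⟨trivial, hxU⟩)
  have hsingle : ∀ X ∈ Ustar A U, ∀ H₁ ∈ Ustar A U, ∀ H₂ ∈ Ustar A U,
      X.induce A = H₁.induce A → X.induce U = H₂.induce U →
      {G' ∈ Ustar A U | G'.induce A = H₁.induce A ∧ G'.induce U = H₂.induce U} = {X} := by
    intro X hX H₁ hH₁ H₂ hH₂ hXA hXB
    ext G'
    simp only [Set.mem_sep_iff, Set.mem_singleton_iff]
    constructor
    · rintro ⟨hG', hGA, hGB⟩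
      exact ustar_unique hG' hX (hGA.trans hXA.symm) (hGB.trans hXB.symm)
    · rintro rfl
      exact ⟨hX, hXA, hXB⟩
  have E : ∀ X ∈ Ustar A U, ∀ H₁ ∈ Ustar A U, ∀ H₂ ∈ Ustar A U,
      X.induce A = H₁.induce A → X.induce U = H₂.induce U →
      π X * mass π (Ustar A U) =
        mass π {G' ∈ Ustar A U | G'.induce A = H₁.induce A} *
          mass π {G' ∈ Ustar A U | G'.induce U = H₂.induce U} := by
    intro X hX H₁ hH₁ H₂ hH₂ hXA hXB
    have hw := hwsm A U hABuniv H₁ hH₁ H₂ hH₂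
    rw [hsingle X hX H₁ hH₁ H₂ hH₂ hXA hXB, mass_singleton] at hw
    exact hw
  have E1 := E P hP P hP P hP rfl rfl
  have E2 := E Q hQ Q hQ Q hQ rfl rfl
  have E3 := E Q' hQ' P hP Q hQ hPQ'A.symm hQQ'B.symm
  have E4 := E P' hP' Q hQ P hP hQP'A.symm hPP'B.symm
  set Z := mass π (Ustar A U) with hZdef
  have hZpos : 0 < Z := lt_of_lt_of_le (hsupp Q hQchord) (le_mass π hlaw.1 hQ)
  set aP := mass π {G' ∈ Ustar A U | G'.induce A = P.induce A} with haP
  set aQ := mass π {G' ∈ Ustar A U | G'.induce A = Q.induce A} with haQ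
  set bP := mass π {G' ∈ Ustar A U | G'.induce U = P.induce U} with hbP
  set bQ := mass π {G' ∈ Ustar A U | G'.induce U = Q.induce U} with hbQ
  have hZZ : π P * π Q * (Z * Z) = π P' * π Q' * (Z * Z) := by
    calc π P * π Q * (Z * Z) = (π P * Z) * (π Q * Z) := by ring
    _ = (aP * bP) * (aQ * bQ) := by rw [E1, E2]
    _ = (aP * bQ) * (aQ * bP) := by ring
    _ = (π Q' * Z) * (π P' * Z) := by rw [← E3, ← E4]
    _ = π P' * π Q' * (Z * Z) := by ring
  have hZZne : Z * Z ≠ 0 := (mul_pos hZpos hZpos).ne'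
  exact mul_right_cancel₀ hZZne hZZ

end WSMAux

/-- factorisation of the density of a weakly structurally Markov law
along a pluperfect ordering:
`π(G) = ∏_j π(G⟨C_j⟩) · ∏_{j≥2} π(G⟨R_j,C_j⟩)/(π(G⟨R_j⟩) π(G⟨C_j⟩))`. -/
theorem wsm_factorisation {V : Type*} [Fintype V] (π : SimpleGraph V → ℝ)
    (hlaw : IsGraphLaw π) (hsupp : FullSupport π) (hwsm : WeaklyStructurallyMarkov π)
    (G : SimpleGraph V) (hG : Chordal G) {J : ℕ} (f : Fin J → Set V)
    (hf : PluperfectOrdering G f)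
    (h : Fin J → Fin J) (hh : ∀ j : Fin J, (j : ℕ) ≠ 0 → h j < j)
    (T : SimpleGraph (Fin J))
    (hT : ∀ a b : Fin J, T.Adj a b ↔ ((a : ℕ) ≠ 0 ∧ h a = b) ∨ ((b : ℕ) ≠ 0 ∧ h b = a))
    (hjunction : ∀ v : V, ((T.induce {i | v ∈ f i}).Connected))
    (hsep : ∀ j : Fin J, (j : ℕ) ≠ 0 → f j ∩ f (h j) = f j ∩ priorUnion f j)
    (R : Fin J → Set V)
    (hR : ∀ j : Fin J, (j : ℕ) ≠ 0 → R j ⊆ f (h j) ∧ f j ∩ f (h j) ⊂ R j) :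
    π G = (∏ i : Fin J, π (coverGraph {f i})) *
      ∏ j ∈ Finset.univ.filter (fun j : Fin J => (j : ℕ) ≠ 0),
        π (coverGraph {R j, f j}) / (π (coverGraph {R j}) * π (coverGraph {f j})) := by
  classical
  rcases Nat.eq_zero_or_pos J with hJ0 | hJpos
  · subst hJ0
    have hVempty : IsEmpty V := by
      by_contra hne
      rw [not_isEmpty_iff] at hne
      obtain ⟨v⟩ := hne
      obtain ⟨M, hM, -⟩ := exists_maxClique_superset G
        (show G.IsClique {v} from Set.pairwise_singleton v G.Adj)
      obtain ⟨i, -⟩ := hf.2.2.1 M hM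
      exact i.elim0
    have hsub : ∀ H : SimpleGraph V, H = G := by
      intro H
      ext u v
      exact isEmptyElim u
    haveI : Unique (SimpleGraph V) := ⟨⟨G⟩, hsub⟩
    have hsum := hlaw.2.2
    rw [finsum_unique] at hsum
    have h1 : π G = 1 := hsub _ ▸ hsum
    rw [h1]
    simp
  · set i₀ : Fin J := ⟨0, hJpos⟩ with hi₀
    have hi₀v : (i₀ : ℕ) = 0 := rfl
    have key : ∀ m, 1 ≤ m → m ≤ J →
        π (coverGraph (prefixCliques f m)) =
          π (coverGraph {f i₀}) *
            ∏ j ∈ Finset.univ.filter (fun j : Fin J => (j : ℕ) ≠ 0 ∧ (j : ℕ) < m),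
              π (coverGraph {R j, f j}) / π (coverGraph {R j}) := by
      intro m hm1
      induction m, hm1 using Nat.le_induction with
      | base =>
        intro hJ1
        have hpre : prefixCliques f 1 = {f i₀} := by
          ext M
          constructor
          · rintro ⟨i, hi, rfl⟩
            have hi' : (i : ℕ) < 1 := hi
            have : i = i₀ := Fin.ext (by rw [hi₀v]; omega)
            rw [this]; rfl
          · rintro rfl
            exact ⟨i₀, Nat.zero_lt_one, rfl⟩
        have hflt : Finset.univ.filter (fun j : Fin J => (j : ℕ) ≠ 0 ∧ (j : ℕ) < 1) = ∅ := by
          ext x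
          simp only [Finset.mem_filter, Finset.mem_univ, true_and, Finset.notMem_empty,
            iff_false]
          omega
        rw [hpre, hflt, Finset.prod_empty, mul_one]
      | succ m hm ih =>
        intro hmJ1
        have hmJ : m ≤ J := by omega
        set jm : Fin J := ⟨m, by omega⟩ with hjm
        have hjm0 : (jm : ℕ) ≠ 0 := by
          show m ≠ 0; omega
        have hstep := wsm_crossover π hlaw hsupp hwsm hG hf hh hsep hR jm hjm0
        have hjmv : (jm : ℕ) = m := rfl
        rw [hjmv] at hstep
        have hQpos : 0 < π (coverGraph {R jm}) :=
          hsupp _ (chordal_cover_subpair (X := R jm) (Y := R jm) (by simp))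
        have hfilter : Finset.univ.filter (fun j : Fin J => (j : ℕ) ≠ 0 ∧ (j : ℕ) < m + 1)
            = insert jm (Finset.univ.filter (fun j : Fin J => (j : ℕ) ≠ 0 ∧ (j : ℕ) < m)) := by
          ext x
          simp only [Finset.mem_filter, Finset.mem_univ, true_and, Finset.mem_insert]
          constructor
          · rintro ⟨hx0, hxm⟩
            rcases Nat.lt_succ_iff_lt_or_eq.1 hxm with h' | h'
            · exact Or.inr ⟨hx0, h'⟩
            · exact Or.inl (Fin.ext h')
          · rintro (rfl | ⟨hx0, hxm⟩)
            · exact ⟨hjm0, by omega⟩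
            · exact ⟨hx0, by omega⟩
        have hnotmem : jm ∉ Finset.univ.filter (fun j : Fin J => (j : ℕ) ≠ 0 ∧ (j : ℕ) < m) := by
          simp only [Finset.mem_filter, Finset.mem_univ, true_and, not_and]
          intro _hx
          show ¬ ((jm : ℕ) < m)
          rw [hjmv]
          omega
        have hmain : π (coverGraph (prefixCliques f (m + 1))) =
            π (coverGraph (prefixCliques f m)) *
              (π (coverGraph {R jm, f jm}) / π (coverGraph {R jm})) := by
          field_simp
          linarith [hstep]
        rw [hfilter, Finset.prod_insert hnotmem, hmain, ih hmJ]
        ring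
    have hGpre : G = coverGraph (prefixCliques f J) := by
      ext u v
      constructor
      · intro hadj
        obtain ⟨k, hu, hv⟩ := adj_exists_clique hf hadj
        exact ⟨hadj.ne, f k, ⟨k, k.2, rfl⟩, hu, hv⟩
      · rintro ⟨hne, M, ⟨i, -, rfl⟩, hu, hv⟩
        exact (hf.2.1 i).1 hu hv hne
    have hmain := key J (by omega) le_rfl
    rw [hGpre, hmain]
    have hfJ : Finset.univ.filter (fun j : Fin J => (j : ℕ) ≠ 0 ∧ (j : ℕ) < J)
        = Finset.univ.filter (fun j : Fin J => (j : ℕ) ≠ 0) := by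
      ext x
      simp [x.isLt]
    rw [hfJ]
    rw [← Finset.prod_filter_mul_prod_filter_not Finset.univ
      (fun j : Fin J => (j : ℕ) ≠ 0) (fun i => π (coverGraph {f i}))]
    have hfilter0 : Finset.univ.filter (fun j : Fin J => ¬ (j : ℕ) ≠ 0) = {i₀} := by
      ext x
      simp only [Finset.mem_filter, Finset.mem_univ, true_and, Finset.mem_singleton,
        not_not, Fin.ext_iff, hi₀v]
    rw [hfilter0, Finset.prod_singleton]
    suffices hs : ∏ j ∈ Finset.univ.filter (fun j : Fin J => (j : ℕ) ≠ 0),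
        π (coverGraph {R j, f j}) / π (coverGraph {R j}) =
        (∏ j ∈ Finset.univ.filter (fun j : Fin J => (j : ℕ) ≠ 0), π (coverGraph {f j})) *
        ∏ j ∈ Finset.univ.filter (fun j : Fin J => (j : ℕ) ≠ 0),
          π (coverGraph {R j, f j}) / (π (coverGraph {R j}) * π (coverGraph {f j})) by
      rw [hs]; ring
    rw [← Finset.prod_mul_distrib]
    apply Finset.prod_congr rfl
    intro x hx
    have h1 : 0 < π (coverGraph {R x}) :=
      hsupp _ (chordal_cover_subpair (X := R x) (Y := R x) (by simp))
    have h2 : 0 < π (coverGraph {f x}) :=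
      hsupp _ (chordal_cover_subpair (X := f x) (Y := f x) (by simp))
    field_simp
end

section
/- Any two unordered pairs {R_1, R_2} and {R_1', R_2'} of subsets of V satisfying R_i ∩ R_j-type conditions — namely R_1 ∩ R_2 = S = R_1' ∩ R_2', with all four sets strict supersets of S and contained in V — can be connected by a finite sequence of such pairs in which consecutive pairs differ by adding or removing a single vertex to/from one member of the pair, with every intermediate pair also satisfying: union ⊆ V, intersection = S, and both members strict supersets of S. -/
open scoped Classical BigOperators

/-- An admissible (ordered representative of an unordered) pair: the two sets meet
exactly in `S` and both are strict supersets of `S`. -/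
def GoodPair {V : Type*} (S : Set V) (p : Set V × Set V) : Prop :=
  p.1 ∩ p.2 = S ∧ S ⊂ p.1 ∧ S ⊂ p.2

/-- One step: add or remove a single vertex to/from one member of the pair,
landing again on an admissible pair. -/
def PairStep {V : Type*} (S : Set V) (p q : Set V × Set V) : Prop :=
  GoodPair S q ∧
    ((p.2 = q.2 ∧ ∃ v : V, q.1 = insert v p.1 ∨ p.1 = insert v q.1) ∨
     (p.1 = q.1 ∧ ∃ v : V, q.2 = insert v p.2 ∨ p.2 = insert v q.2))

section Aux

variable {V : Type*} [Fintype V] {S : Set V}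

private lemma goodpair_swap {p : Set V × Set V} (h : GoodPair S p) :
    GoodPair S (p.2, p.1) :=
  ⟨by rw [← h.1]; exact Set.inter_comm _ _, h.2.2, h.2.1⟩

private lemma pairstep_symm {p q : Set V × Set V} (hp : GoodPair S p) (h : PairStep S p q) :
    PairStep S q p := by
  obtain ⟨hq, hmv⟩ := h
  refine ⟨hp, ?_⟩
  rcases hmv with ⟨h2, v, hv⟩ | ⟨h1, v, hv⟩
  · exact Or.inl ⟨h2.symm, v, hv.symm⟩
  · exact Or.inr ⟨h1.symm, v, hv.symm⟩

private lemma pairstep_swap {p q : Set V × Set V} (h : PairStep S p q) :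
    PairStep S (p.2, p.1) (q.2, q.1) := by
  obtain ⟨hq, hmv⟩ := h
  refine ⟨goodpair_swap hq, ?_⟩
  rcases hmv with ⟨h2, v, hv⟩ | ⟨h1, v, hv⟩
  · exact Or.inr ⟨h2, v, hv⟩
  · exact Or.inl ⟨h1, v, hv⟩

private lemma rtg_good {p q : Set V × Set V} (hp : GoodPair S p)
    (h : Relation.ReflTransGen (PairStep S) p q) : GoodPair S q := by
  induction h with
  | refl => exact hp
  | tail _ hstep _ => exact hstep.1

private lemma rtg_symm {p q : Set V × Set V} (hp : GoodPair S p)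
    (h : Relation.ReflTransGen (PairStep S) p q) :
    Relation.ReflTransGen (PairStep S) q p := by
  induction h with
  | refl => exact .refl
  | tail hpb hstep ih =>
    exact (Relation.ReflTransGen.single (pairstep_symm (rtg_good hp hpb) hstep)).trans ih

private lemma rtg_swap {p q : Set V × Set V}
    (h : Relation.ReflTransGen (PairStep S) p q) :
    Relation.ReflTransGen (PairStep S) (p.2, p.1) (q.2, q.1) := by
  induction h with
  | refl => exact .refl
  | tail _ hstep ih => exact ih.tail (pairstep_swap hstep)

private lemma shrink_left (a : V) (haS : a ∉ S) :
    ∀ (n : ℕ) (R₁ R₂ : Set V), (R₁ \ insert a S).ncard = n → a ∈ R₁ →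
      GoodPair S (R₁, R₂) →
      Relation.ReflTransGen (PairStep S) (R₁, R₂) (insert a S, R₂) := by
  intro n
  induction n with
  | zero =>
    intro R₁ R₂ hn ha hg
    have hfin : (R₁ \ insert a S).Finite := Set.toFinite _
    have hemp : R₁ \ insert a S = ∅ := (Set.ncard_eq_zero hfin).1 hn
    have hsub : R₁ ⊆ insert a S := by
      intro x hx
      by_contra hx'
      exact absurd (Set.mem_diff_of_mem hx hx') (by rw [hemp]; exact Set.notMem_empty x)
    have : R₁ = insert a S := hsub.antisymm (Set.insert_subset ha hg.2.1.subset)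
    rw [this]
  | succ n ih =>
    intro R₁ R₂ hn ha hg
    have hne : (R₁ \ insert a S).Nonempty := by
      rw [Set.nonempty_iff_ne_empty]
      intro he
      rw [he, Set.ncard_empty] at hn
      exact Nat.succ_ne_zero n hn.symm
    obtain ⟨v, hv⟩ := hne
    have hvR : v ∈ R₁ := hv.1
    have hvS : v ∉ S := fun hs => hv.2 (Set.mem_insert_of_mem _ hs)
    have hva : v ≠ a := fun hva => hv.2 (hva ▸ Set.mem_insert _ _)
    -- step to (R₁ \ {v}, R₂)
    have hgood' : GoodPair S (R₁ \ {v}, R₂) := by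
      refine ⟨?_, ?_, hg.2.2⟩
      · apply Set.Subset.antisymm
        · intro x hx
          rw [← hg.1]; exact ⟨hx.1.1, hx.2⟩
        · intro x hx
          refine ⟨⟨hg.2.1.subset hx, ?_⟩, (hg.1 ▸ Set.inter_subset_right : S ⊆ R₂) hx⟩
          rintro rfl; exact hvS hx
      · refine ⟨fun x hx => ⟨hg.2.1.subset hx, fun he => hvS (he ▸ hx)⟩, ?_⟩
        intro hc
        exact haS (hc ⟨ha, fun he => hva (Set.mem_singleton_iff.1 he).symm⟩)
    have hstep : PairStep S (R₁, R₂) (R₁ \ {v}, R₂) := by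
      refine ⟨hgood', Or.inl ⟨rfl, v, Or.inr ?_⟩⟩
      simp only
      rw [Set.insert_diff_singleton, Set.insert_eq_of_mem hvR]
    have hn' : ((R₁ \ {v}) \ insert a S).ncard = n := by
      rw [Set.diff_diff_comm]
      rw [Set.ncard_diff_singleton_of_mem hv]
      omega
    exact Relation.ReflTransGen.head hstep
      (ih (R₁ \ {v}) R₂ hn' ⟨ha, fun he => hva (Set.mem_singleton_iff.1 he).symm⟩ hgood')

private lemma good_canon {a b : V} (haS : a ∉ S) (hbS : b ∉ S) (hab : a ≠ b) :
    GoodPair S ((insert a S : Set V), (insert b S : Set V)) := by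
  refine ⟨?_, Set.ssubset_insert haS, Set.ssubset_insert hbS⟩
  apply Set.Subset.antisymm
  · rintro x ⟨hxa, hxb⟩
    rcases Set.mem_insert_iff.1 hxa with rfl | hx
    · rcases Set.mem_insert_iff.1 hxb with rfl | hx
      · exact absurd rfl hab
      · exact hx
    · exact hx
  · exact Set.subset_inter (Set.subset_insert _ _) (Set.subset_insert _ _)

private lemma replace_left {a a' b : V} (haS : a ∉ S) (ha'S : a' ∉ S) (hbS : b ∉ S)
    (hab : a ≠ b) (ha'b : a' ≠ b) :
    Relation.ReflTransGen (PairStep S)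
      ((insert a S : Set V), (insert b S : Set V)) (insert a' S, insert b S) := by
  rcases eq_or_ne a a' with rfl | haa'
  · exact .refl
  have hgmid : GoodPair S ((insert a' (insert a S) : Set V), (insert b S : Set V)) := by
    refine ⟨?_, ?_, Set.ssubset_insert hbS⟩
    · apply Set.Subset.antisymm
      · rintro x ⟨hx1, hx2⟩
        rcases Set.mem_insert_iff.1 hx1 with rfl | hx1
        · rcases Set.mem_insert_iff.1 hx2 with rfl | hx2
          · exact absurd rfl ha'b
          · exact hx2
        rcases Set.mem_insert_iff.1 hx1 with rfl | hx1
        · rcases Set.mem_insert_iff.1 hx2 with rfl | hx2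
          · exact absurd rfl hab
          · exact hx2
        · exact hx1
      · exact Set.subset_inter
          ((Set.subset_insert _ _).trans (Set.subset_insert _ _)) (Set.subset_insert _ _)
    · exact ⟨(Set.subset_insert _ _).trans (Set.subset_insert _ _),
        fun hc => ha'S (hc (Set.mem_insert _ _))⟩
  have hstep1 : PairStep S ((insert a S : Set V), (insert b S : Set V))
      (insert a' (insert a S), insert b S) :=
    ⟨hgmid, Or.inl ⟨rfl, a', Or.inl rfl⟩⟩
  have hstep2 : PairStep S ((insert a' (insert a S) : Set V), (insert b S : Set V))
      (insert a' S, insert b S) := by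
    refine ⟨good_canon ha'S hbS ha'b, Or.inl ⟨rfl, a, Or.inr ?_⟩⟩
    simp only
    rw [Set.insert_comm]
  exact (Relation.ReflTransGen.single hstep1).tail hstep2

end Aux

/-- any two admissible unordered pairs with the same intersection `S`
can be connected by single-vertex addition/removal steps through admissible pairs. -/
theorem pairs_connected {V : Type*} [Fintype V] (S : Set V)
    (hS : S.ncard ≤ Fintype.card V - 2) (R₁ R₂ R₁' R₂' : Set V)
    (h : GoodPair S (R₁, R₂)) (h' : GoodPair S (R₁', R₂')) :
    Relation.ReflTransGen (PairStep S) (R₁, R₂) (R₁', R₂') ∨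
    Relation.ReflTransGen (PairStep S) (R₁, R₂) (R₂', R₁') := by
  obtain ⟨a, ha1, haS⟩ := Set.exists_of_ssubset h.2.1
  obtain ⟨b, hb2, hbS⟩ := Set.exists_of_ssubset h.2.2
  obtain ⟨a', ha1', ha'S⟩ := Set.exists_of_ssubset h'.2.1
  obtain ⟨b', hb2', hb'S⟩ := Set.exists_of_ssubset h'.2.2
  have hab : a ≠ b := by
    rintro rfl
    have : a ∈ R₁ ∩ R₂ := ⟨ha1, hb2⟩
    rw [h.1] at this; exact haS this
  have ha'b' : a' ≠ b' := by
    rintro rfl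
    have : a' ∈ R₁' ∩ R₂' := ⟨ha1', hb2'⟩
    rw [h'.1] at this; exact ha'S this
  have P1 : Relation.ReflTransGen (PairStep S) (R₁, R₂) (insert a S, R₂) :=
    shrink_left a haS _ R₁ R₂ rfl ha1 h
  have hg1 : GoodPair S ((insert a S : Set V), R₂) := rtg_good h P1
  have P2 : Relation.ReflTransGen (PairStep S)
      ((insert a S : Set V), R₂) (insert a S, insert b S) :=
    rtg_swap (shrink_left b hbS _ R₂ (insert a S) rfl hb2 (goodpair_swap hg1))
  have P : Relation.ReflTransGen (PairStep S) (R₁, R₂) (insert a S, insert b S) :=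
    P1.trans P2
  have P1' : Relation.ReflTransGen (PairStep S) (R₁', R₂') (insert a' S, R₂') :=
    shrink_left a' ha'S _ R₁' R₂' rfl ha1' h'
  have hg1' : GoodPair S ((insert a' S : Set V), R₂') := rtg_good h' P1'
  have P' : Relation.ReflTransGen (PairStep S) (R₁', R₂') (insert a' S, insert b' S) :=
    P1'.trans (rtg_swap (shrink_left b' hb'S _ R₂' (insert a' S) rfl hb2' (goodpair_swap hg1')))
  rcases eq_or_ne a' b with heq | hne
  · -- a' = b : go to the swapped target
    have hb'b : b' ≠ b := fun e => ha'b' (heq.trans e.symm)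
    have hbb' : b ≠ b' := fun e => ha'b' (heq.trans e)
    have M1 : Relation.ReflTransGen (PairStep S)
        ((insert a S : Set V), (insert b S : Set V)) (insert b' S, insert b S) :=
      replace_left haS hb'S hbS hab hb'b
    have M2 : Relation.ReflTransGen (PairStep S)
        ((insert b' S : Set V), (insert b S : Set V)) (insert b' S, insert a' S) :=
      rtg_swap (replace_left hbS ha'S hb'S hbb' ha'b')
    have Pt : Relation.ReflTransGen (PairStep S)
        ((insert b' S : Set V), (insert a' S : Set V)) (R₂', R₁') :=
      rtg_symm (goodpair_swap h') (rtg_swap P')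
    exact Or.inr (P.trans ((M1.trans M2).trans Pt))
  · have M1 : Relation.ReflTransGen (PairStep S)
        ((insert a S : Set V), (insert b S : Set V)) (insert a' S, insert b S) :=
      replace_left haS ha'S hbS hab hne
    have M2 : Relation.ReflTransGen (PairStep S)
        ((insert a' S : Set V), (insert b S : Set V)) (insert a' S, insert b' S) :=
      rtg_swap (replace_left hbS hb'S ha'S hne.symm (Ne.symm ha'b'))
    exact Or.inl (P.trans ((M1.trans M2).trans (rtg_symm h' P')))
end

section
/- The restriction of the Erdős–Rényi random graph law with edge probability p ∈ (0,1) to decomposable graphs is a clique exponential family law: for every decomposable G, P(G) ∝ ∏_{C ∈ 𝒞(G)} φ_C / ∏_{S ∈ 𝒮(G)} φ_S with φ_A = (p/(1−p))^{|A|(|A|−1)/2}. -/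
open scoped Classical BigOperators

section AuxLemmas
open SimpleGraph

lemma aux_two_mul_choose_two (n : ℕ) : n * n - n = 2 * n.choose 2 := by
  induction n with
  | zero => simp
  | succ n ih =>
    have h2 : n ≤ n * n := by nlinarith
    have h3 : (n + 1) * (n + 1) = n * n + 2 * n + 1 := by ring
    have h4 : Nat.choose (n+1) 2 = n + Nat.choose n 2 := by
      rw [Nat.choose_succ_succ, Nat.choose_one_right]
    omega

lemma reachable_induce_of_support {α : Type*} {T : SimpleGraph α} {S : Set α} :
    ∀ {i j : α} (w : T.Walk i j), (∀ x ∈ w.support, x ∈ S) → ∀ (hi : i ∈ S) (hj : j ∈ S),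
      (T.induce S).Reachable ⟨i, hi⟩ ⟨j, hj⟩ := by
  intro i j w
  induction w with
  | nil => intro _ hi hj; exact Reachable.refl _
  | cons hab w ih =>
    rename_i a b c
    intro hw hi hj
    have hb : b ∈ S := hw b (by simp)
    have h1 : (T.induce S).Adj ⟨a, hi⟩ ⟨b, hb⟩ := hab
    exact h1.reachable.trans (ih (fun x hx => hw x (by simp [hx])) hb hj)

lemma path_support_subset {α : Type*} {T : SimpleGraph α} (hT : T.IsTree) {A : Set α}
    (hA : (T.induce A).Connected) {i j : α} (hi : i ∈ A) (hj : j ∈ A)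
    {p : T.Walk i j} (hp : p.IsPath) : ∀ x ∈ p.support, x ∈ A := by
  obtain ⟨w'⟩ := hA ⟨i, hi⟩ ⟨j, hj⟩
  let w : T.Walk i j := w'.map (SimpleGraph.Embedding.induce A).toHom
  have hsup : ∀ x ∈ w.support, x ∈ A := by
    intro x hx
    have key : ∀ x ∈ (w'.map (SimpleGraph.Embedding.induce A).toHom).support, x ∈ A := by
      intro x hx
      rw [SimpleGraph.Walk.support_map] at hx
      obtain ⟨y, -, rfl⟩ := List.mem_map.1 hx
      exact y.2
    exact key x hx
  have huniq : p = (w.toPath : T.Walk i j) := (hT.existsUnique_path i j).unique hp w.toPath.2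
  intro x hx
  exact hsup x (SimpleGraph.Walk.support_toPath_subset w (huniq ▸ hx))

lemma induce_inter_connected {α : Type*} {T : SimpleGraph α} (hT : T.IsTree) {A B : Set α}
    (hA : (T.induce A).Connected) (hB : (T.induce B).Connected)
    (hne : (A ∩ B).Nonempty) : (T.induce (A ∩ B)).Connected := by
  rw [SimpleGraph.connected_iff]
  refine ⟨?_, ⟨⟨hne.choose, hne.choose_spec⟩⟩⟩
  rintro ⟨i, hiA, hiB⟩ ⟨j, hjA, hjB⟩
  obtain ⟨p, hp, -⟩ := hT.existsUnique_path i j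
  have h1 := path_support_subset hT hA hiA hjA hp
  have h2 := path_support_subset hT hB hiB hjB hp
  exact reachable_induce_of_support p (fun x hx => Set.mem_inter (h1 x hx) (h2 x hx)) _ _

lemma induce_isTree {α : Type*} {T : SimpleGraph α} (hT : T.IsAcyclic) {S : Set α}
    (hS : (T.induce S).Connected) : (T.induce S).IsTree := by
  refine ⟨hS, ?_⟩
  intro v c hc
  exact hT _ (hc.map (f := (SimpleGraph.Embedding.induce S).toHom) Subtype.val_injective)


lemma exists_maxClique {V : Type*} [Finite V] {G : SimpleGraph V} {s : Set V}
    (hs : G.IsClique s) : ∃ C, s ⊆ C ∧ MaxClique G C := by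
  obtain ⟨C, hsC, hC, hmax⟩ := Finite.exists_le_maximal hs
  exact ⟨C, hsC, hC, fun D hD hCD => le_antisymm hCD (hmax hD hCD)⟩

lemma key_count {V : Type*} [Fintype V] {G : SimpleGraph V} (JT : JunctionTree G)
    {u v : V} (huv : u ≠ v) :
    (Finset.univ.filter fun i : Fin JT.J => u ∈ JT.clique i ∧ v ∈ JT.clique i).card =
      (JT.T.edgeFinset.filter fun e => u ∈ JT.sep e ∧ v ∈ JT.sep e).card +
        (if G.Adj u v then 1 else 0) := by
  have hsep : ∀ a b : Fin JT.J, JT.sep s(a, b) = JT.clique a ∩ JT.clique b :=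
    fun a b => Sym2.lift_mk _ a b
  by_cases hadj : G.Adj u v
  · rw [if_pos hadj]
    set Sfin : Finset (Fin JT.J) :=
      Finset.univ.filter (fun i => u ∈ JT.clique i ∧ v ∈ JT.clique i) with hSfin
    have hset : (↑Sfin : Set (Fin JT.J)) =
        {i | u ∈ JT.clique i} ∩ {i | v ∈ JT.clique i} := by
      ext i; simp [hSfin, Set.mem_inter_iff]
    have hSne : (↑Sfin : Set (Fin JT.J)).Nonempty := by
      have hcl : G.IsClique {u, v} := SimpleGraph.isClique_pair.2 fun _ => hadj
      obtain ⟨C, hsub, hmax⟩ := exists_maxClique hcl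
      obtain ⟨i, rfl⟩ := JT.clique_surj C hmax
      refine ⟨i, ?_⟩
      simp only [hSfin, Finset.coe_filter, Finset.mem_univ, true_and, Set.mem_setOf_eq]
      exact ⟨hsub (by simp), hsub (by simp)⟩
    have hconn : (JT.T.induce ↑Sfin).Connected := by
      rw [hset]
      exact induce_inter_connected JT.isTree (JT.junction u) (JT.junction v) (hset ▸ hSne)
    have htree := induce_isTree JT.isTree.IsAcyclic hconn
    have hcard := htree.card_edgeFinset
    have hc2 : Fintype.card ↥(↑Sfin : Set (Fin JT.J)) = Sfin.card := by
      rw [← Set.ncard_coe_finset Sfin, Set.ncard_eq_toFinset_card', Set.toFinset_card]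
    rw [hc2] at hcard
    have himg : JT.T.edgeFinset.filter (fun e => u ∈ JT.sep e ∧ v ∈ JT.sep e) =
        (JT.T.induce ↑Sfin).edgeFinset.image (Sym2.map Subtype.val) := by
      ext e
      refine Sym2.ind (fun x y => ?_) e
      simp only [Finset.mem_filter, SimpleGraph.mem_edgeFinset, SimpleGraph.mem_edgeSet,
        Finset.mem_image]
      constructor
      · rintro ⟨hadjxy, hu, hv⟩
        rw [hsep x y] at hu hv
        have hx : x ∈ Sfin := by simp [hSfin]; exact ⟨hu.1, hv.1⟩
        have hy : y ∈ Sfin := by simp [hSfin]; exact ⟨hu.2, hv.2⟩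
        refine ⟨s(⟨x, Finset.mem_coe.2 hx⟩, ⟨y, Finset.mem_coe.2 hy⟩), ?_, ?_⟩
        · exact hadjxy
        · simp [Sym2.map_pair_eq]
      · rintro ⟨e', he', hmap⟩
        revert he' hmap
        refine Sym2.ind (fun a b => ?_) e'
        intro he' hmap
        rw [Sym2.map_pair_eq, Sym2.eq_iff] at hmap
        have hadj' : JT.T.Adj a.val b.val := by
          exact he'
        have ha : u ∈ JT.clique a.val ∧ v ∈ JT.clique a.val := by
          exact (Finset.mem_filter.1 (Finset.mem_coe.1 a.2)).2
        have hb : u ∈ JT.clique b.val ∧ v ∈ JT.clique b.val := by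
          exact (Finset.mem_filter.1 (Finset.mem_coe.1 b.2)).2
        rcases hmap with ⟨h1, h2⟩ | ⟨h1, h2⟩
        · subst h1; subst h2
          exact ⟨hadj', by rw [hsep]; exact ⟨⟨ha.1, hb.1⟩, ⟨ha.2, hb.2⟩⟩⟩
        · subst h1; subst h2
          exact ⟨hadj'.symm, by rw [hsep]; exact ⟨⟨hb.1, ha.1⟩, ⟨hb.2, ha.2⟩⟩⟩
    rw [himg, Finset.card_image_of_injective _ (Sym2.map.injective Subtype.val_injective)]
    omega
  · rw [if_neg hadj]
    have h1 : Finset.univ.filter (fun i : Fin JT.J => u ∈ JT.clique i ∧ v ∈ JT.clique i) = ∅ := by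
      rw [Finset.filter_eq_empty_iff]
      rintro i - ⟨hu, hv⟩
      exact hadj ((JT.clique_max i).1 hu hv huv)
    have h2 : JT.T.edgeFinset.filter (fun e => u ∈ JT.sep e ∧ v ∈ JT.sep e) = ∅ := by
      rw [Finset.filter_eq_empty_iff]
      intro e he
      revert he
      refine Sym2.ind (fun a b => ?_) e
      rintro - ⟨hu, hv⟩
      rw [hsep a b] at hu hv
      exact hadj ((JT.clique_max a).1 hu.1 hv.1 huv)
    rw [h1, h2]
    simp

lemma sum_choose_eq {V : Type*} [Fintype V] {G : SimpleGraph V} (JT : JunctionTree G) :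
    ∑ i : Fin JT.J, (JT.clique i).ncard.choose 2 =
      G.edgeFinset.card + ∑ e ∈ JT.T.edgeFinset, (JT.sep e).ncard.choose 2 := by
  apply Nat.eq_of_mul_eq_mul_left (show 0 < 2 by norm_num)
  have hL : ∑ p ∈ (Finset.univ : Finset V).offDiag,
      (Finset.univ.filter fun i : Fin JT.J => p.1 ∈ JT.clique i ∧ p.2 ∈ JT.clique i).card =
      2 * ∑ i : Fin JT.J, (JT.clique i).ncard.choose 2 := by
    simp_rw [Finset.card_filter]
    rw [Finset.sum_comm, Finset.mul_sum]
    refine Finset.sum_congr rfl fun i _ => ?_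
    have heq : (Finset.univ : Finset V).offDiag.filter
        (fun p => p.1 ∈ JT.clique i ∧ p.2 ∈ JT.clique i) = ((JT.clique i).toFinset).offDiag := by
      ext p
      simp only [Finset.mem_filter, Finset.mem_offDiag, Finset.mem_univ, true_and,
        Set.mem_toFinset]
      tauto
    rw [← Finset.card_filter, heq, Finset.offDiag_card, ← Set.ncard_eq_toFinset_card',
      aux_two_mul_choose_two]
  have hB : ∑ p ∈ (Finset.univ : Finset V).offDiag,
      (JT.T.edgeFinset.filter fun e => p.1 ∈ JT.sep e ∧ p.2 ∈ JT.sep e).card =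
      2 * ∑ e ∈ JT.T.edgeFinset, (JT.sep e).ncard.choose 2 := by
    simp_rw [Finset.card_filter]
    rw [Finset.sum_comm, Finset.mul_sum]
    refine Finset.sum_congr rfl fun e _ => ?_
    have heq : (Finset.univ : Finset V).offDiag.filter
        (fun p => p.1 ∈ JT.sep e ∧ p.2 ∈ JT.sep e) = ((JT.sep e).toFinset).offDiag := by
      ext p
      simp only [Finset.mem_filter, Finset.mem_offDiag, Finset.mem_univ, true_and,
        Set.mem_toFinset]
      tauto
    rw [← Finset.card_filter, heq, Finset.offDiag_card, ← Set.ncard_eq_toFinset_card',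
      aux_two_mul_choose_two]
  have hA : ∑ p ∈ (Finset.univ : Finset V).offDiag, (if G.Adj p.1 p.2 then 1 else 0) =
      2 * G.edgeFinset.card := by
    rw [← Finset.card_filter, SimpleGraph.two_mul_card_edgeFinset]
    congr 1
    ext p
    simp only [Finset.mem_filter, Finset.mem_offDiag, Finset.mem_univ, true_and]
    exact ⟨fun h => h.2, fun h => ⟨h.ne, h⟩⟩
  calc 2 * ∑ i : Fin JT.J, (JT.clique i).ncard.choose 2
      = ∑ p ∈ (Finset.univ : Finset V).offDiag,
        (Finset.univ.filter fun i : Fin JT.J => p.1 ∈ JT.clique i ∧ p.2 ∈ JT.clique i).card :=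
        hL.symm
    _ = ∑ p ∈ (Finset.univ : Finset V).offDiag,
        ((JT.T.edgeFinset.filter fun e => p.1 ∈ JT.sep e ∧ p.2 ∈ JT.sep e).card +
          (if G.Adj p.1 p.2 then 1 else 0)) :=
        Finset.sum_congr rfl fun p hp => key_count JT (Finset.mem_offDiag.1 hp).2.2
    _ = 2 * (G.edgeFinset.card + ∑ e ∈ JT.T.edgeFinset, (JT.sep e).ncard.choose 2) := by
        rw [Finset.sum_add_distrib, hB, hA]
        ring

end AuxLemmas

/-- the Erdős–Rényi law with edge probability `p`, restricted to
decomposable graphs, is a clique exponential family law with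
`φ_A = (p/(1−p))^{|A|(|A|−1)/2}`. -/
theorem erdos_renyi_is_clique_exponential {V : Type*} [Fintype V] (p : ℝ)
    (hp0 : 0 < p) (hp1 : p < 1) :
    ∃ c : ℝ, 0 < c ∧ ∀ G : SimpleGraph V, Chordal G → ∀ JT : JunctionTree G,
      p ^ G.edgeSet.ncard * (1 - p) ^ ((Fintype.card V).choose 2 - G.edgeSet.ncard) =
        c * (∏ i : Fin JT.J, (p / (1 - p)) ^ ((JT.clique i).ncard.choose 2)) /
          ∏ᶠ e ∈ JT.T.edgeSet, (p / (1 - p)) ^ ((JT.sep e).ncard.choose 2) := by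
  have h1p : (0:ℝ) < 1 - p := by linarith
  refine ⟨(1 - p) ^ ((Fintype.card V).choose 2), by positivity, ?_⟩
  intro G hG JT
  have hq : (0:ℝ) < p / (1 - p) := div_pos hp0 h1p
  have hkey := sum_choose_eq JT
  have hm : G.edgeSet.ncard = G.edgeFinset.card := Set.ncard_eq_toFinset_card' _
  have hmN : G.edgeFinset.card ≤ (Fintype.card V).choose 2 :=
    SimpleGraph.card_edgeFinset_le_card_choose_two
  have h2 : ∏ᶠ e ∈ JT.T.edgeSet, (p / (1-p)) ^ ((JT.sep e).ncard.choose 2) =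
      ∏ e ∈ JT.T.edgeFinset, (p / (1-p)) ^ ((JT.sep e).ncard.choose 2) := by
    rw [← SimpleGraph.coe_edgeFinset, finprod_mem_coe_finset]
  rw [h2, hm, Finset.prod_pow_eq_pow_sum, Finset.prod_pow_eq_pow_sum, hkey, pow_add,
    mul_div_assoc, mul_div_assoc, div_self (pow_ne_zero _ hq.ne'), mul_one,
    ← pow_sub_mul_pow (1-p) hmN, div_pow]
  field_simp
end

section
/- If a graph law π on decomposable graphs is of clique–separator factorisation form with parameters (φ, ψ), and data X has decomposable likelihood p(X|G) = ∏_{C ∈ 𝒞(G)} λ_C(X_C) / ∏_{S ∈ 𝒮(G)} λ_S(X_S), then the posterior π(G|X) ∝ π(G)p(X|G) is again of clique–separator factorisation form, with parameters φ'_A = φ_A λ_A(X_A) and ψ'_A = ψ_A λ_A(X_A). -/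
open scoped Classical BigOperators

/-- conjugacy: a clique–separator factorisation prior combined with
a decomposable likelihood yields a clique–separator factorisation posterior with
parameters `φ_A λ_A` and `ψ_A λ_A`. -/
theorem csf_conjugacy {V : Type*} [Fintype V] (π L : SimpleGraph V → ℝ)
    (φ ψ lam : Set V → ℝ) (c : ℝ)
    (hφ : ∀ A, 0 < φ A) (hψ : ∀ A, 0 < ψ A) (hlam : ∀ A, 0 < lam A) (hc : 0 < c)
    (hπ : ∀ G : SimpleGraph V, Chordal G → ∀ JT : JunctionTree G,
      π G = c * (∏ i : Fin JT.J, φ (JT.clique i)) /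
        ∏ᶠ e ∈ JT.T.edgeSet, ψ (JT.sep e))
    (hL : ∀ G : SimpleGraph V, Chordal G → ∀ JT : JunctionTree G,
      L G = (∏ i : Fin JT.J, lam (JT.clique i)) /
        ∏ᶠ e ∈ JT.T.edgeSet, lam (JT.sep e)) :
    ∃ c' : ℝ, 0 < c' ∧ ∀ G : SimpleGraph V, Chordal G → ∀ JT : JunctionTree G,
      π G * L G = c' * (∏ i : Fin JT.J, φ (JT.clique i) * lam (JT.clique i)) /
        ∏ᶠ e ∈ JT.T.edgeSet, ψ (JT.sep e) * lam (JT.sep e) := by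
  refine ⟨c, hc, fun G hG JT => ?_⟩
  rw [hπ G hG JT, hL G hG JT]
  have hfin : JT.T.edgeSet.Finite := Set.toFinite _
  rw [Finset.prod_mul_distrib, finprod_mem_mul_distrib hfin]
  rw [div_mul_div_comm]
  ring
end

section
/- If (A,B) is a decomposition of a decomposable graph G and S = A ∩ B is a maximal complete subset of G_A (and of G_B whenever it is a separator), then the maximal-clique set of G is the union of the maximal cliques of G_A and of G_B, each maximal clique of G being entirely contained in A or in B. -/
open scoped Classical BigOperators

/-- if `(A,B)` is a decomposition of a decomposable graph `G` and
`S = A ∩ B` is a maximal complete subset of `G_A` (and of `G_B`), then the maximal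
cliques of `G` are exactly the maximal cliques of `G_A` together with those of
`G_B`, and every maximal clique of `G` lies entirely within `A` or within `B`. -/
theorem maxCliques_of_decomposition {V : Type*} [Fintype V] (G : SimpleGraph V)
    (hG : Chordal G) (A B : Set V) (hAB : IsDecomposition G A B)
    (hA : MaxCliqueIn G A (A ∩ B)) (hB : MaxCliqueIn G B (A ∩ B)) :
    {C : Set V | MaxClique G C} =
      {C : Set V | MaxCliqueIn G A C ∨ MaxCliqueIn G B C} ∧
    ∀ C : Set V, MaxClique G C → C ⊆ A ∨ C ⊆ B := by
  obtain ⟨hcov, hsepc, hsep⟩ := hAB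
  -- every clique of G is contained in A or in B
  have key : ∀ C : Set V, G.IsClique C → C ⊆ A ∨ C ⊆ B := by
    intro C hC
    by_contra h
    push_neg at h
    obtain ⟨hnA, hnB⟩ := h
    obtain ⟨v, hvC, hvA⟩ := Set.not_subset.mp hnA
    obtain ⟨u, huC, huB⟩ := Set.not_subset.mp hnB
    have huA : u ∈ A := by
      have hu := Set.mem_univ u; rw [← hcov] at hu; exact hu.resolve_right huB
    have hvB : v ∈ B := by
      have hv := Set.mem_univ v; rw [← hcov] at hv; exact hv.resolve_left hvA
    have hne : u ≠ v := fun h => hvA (h ▸ huA)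
    have hadj : G.Adj u v := hC huC hvC hne
    obtain ⟨w, hw, hws⟩ :=
      hsep u ⟨huA, huB⟩ v ⟨hvB, hvA⟩ (SimpleGraph.Walk.cons hadj SimpleGraph.Walk.nil)
    simp [SimpleGraph.Walk.support] at hws
    rcases hws with rfl | rfl
    · exact huB hw.2
    · exact hvA hw.1
  have fwd : ∀ C : Set V, MaxClique G C → MaxCliqueIn G A C ∨ MaxCliqueIn G B C := by
    intro C hC
    rcases key C hC.1 with hCA | hCB
    · exact Or.inl ⟨hCA, hC.1, fun D _ hD hCD => hC.2 D hD hCD⟩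
    · exact Or.inr ⟨hCB, hC.1, fun D _ hD hCD => hC.2 D hD hCD⟩
  have bwdA : ∀ C : Set V, MaxCliqueIn G A C → MaxClique G C := by
    intro C hC
    refine ⟨hC.2.1, fun D hD hCD => ?_⟩
    rcases key D hD with hDA | hDB
    · exact hC.2.2 D hDA hD hCD
    · have hCAB : C ⊆ A ∩ B := Set.subset_inter hC.1 (hCD.trans hDB)
      have hCeq : C = A ∩ B := hC.2.2 (A ∩ B) Set.inter_subset_left hsepc hCAB
      have : A ∩ B = D := hB.2.2 D hDB hD (hCeq ▸ hCD)
      exact hCeq.trans this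
  have bwdB : ∀ C : Set V, MaxCliqueIn G B C → MaxClique G C := by
    intro C hC
    refine ⟨hC.2.1, fun D hD hCD => ?_⟩
    rcases key D hD with hDA | hDB
    · have hCAB : C ⊆ A ∩ B := Set.subset_inter (hCD.trans hDA) hC.1
      have hCeq : C = A ∩ B := hC.2.2 (A ∩ B) Set.inter_subset_right hsepc hCAB
      have : A ∩ B = D := hA.2.2 D hDA hD (hCeq ▸ hCD)
      exact hCeq.trans this
    · exact hC.2.2 D hDB hD hCD
  constructor
  · ext C
    simp only [Set.mem_setOf_eq]
    exact ⟨fwd C, fun h => h.elim (bwdA C) (bwdB C)⟩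
  · exact fun C hC => key C hC.1
end
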